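/- arXiv:1109.5478 — 11 statements merged into one kernel-verified Lean document; each statement's English description precedes it below -/
import Mathlib

section
/- Let O ⊆ M_d(ℂ) be an operator system, i.e., a ℂ-linear subspace of the d×d complex matrices such that the identity matrix 1 belongs to O and O is closed under conjugate transpose. Then there exists a POVM A with exactly n = dim_ℂ O outcomes such that the ℂ-linear span of {A_1, …, A_n} equals O; moreover, every POVM B whose elements ℂ-span O has at least dim_ℂ O outcomes. -/
open Matrix
open scoped ComplexOrder

/-- A POVM with `n` outcomes on `ℂ^d`: a family of positive semidefinite matrices summing to the
identity. -/
def IsPOVM {d n : ℕ} (A : Fin n → Matrix (Fin d) (Fin d) ℂ) : Prop :=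
  (∀ j, (A j).PosSemidef) ∧ ∑ j, A j = 1

lemma psd_smul_real {d : ℕ} {M : Matrix (Fin d) (Fin d) ℂ} (hM : M.PosSemidef)
    {c : ℝ} (hc : 0 ≤ c) : ((c : ℂ) • M).PosSemidef := by
  refine ⟨?_, fun x => ?_⟩
  · unfold Matrix.IsHermitian
    rw [conjTranspose_smul, hM.1.eq]
    simp [Complex.conj_ofReal]
  · exact (hM.smul (Complex.zero_le_real.2 hc)).2 x

lemma herm_shift {d : ℕ} {H : Matrix (Fin d) (Fin d) ℂ} (hH : H.IsHermitian) :
    ∃ c : ℝ, 0 ≤ c ∧ ((c : ℂ) • (1 : Matrix (Fin d) (Fin d) ℂ) + H).PosSemidef := by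
  refine ⟨∑ i, |hH.eigenvalues i|, Finset.sum_nonneg fun i _ => abs_nonneg _, ?_⟩
  set c : ℝ := ∑ i, |hH.eigenvalues i| with hcdef
  have hU : (hH.eigenvectorUnitary : Matrix (Fin d) (Fin d) ℂ)
      * (star (hH.eigenvectorUnitary : Matrix (Fin d) (Fin d) ℂ)) = 1 :=
    (Matrix.mem_unitaryGroup_iff).mp hH.eigenvectorUnitary.2
  have hdiag : diagonal (fun i => ((c + hH.eigenvalues i : ℝ) : ℂ))
      = (c : ℂ) • 1 + diagonal (RCLike.ofReal ∘ hH.eigenvalues) := by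
    rw [← diagonal_one, ← diagonal_smul, diagonal_add]
    congr 1; funext i; push_cast; simp [mul_comm]
  have hkey : (c : ℂ) • (1 : Matrix (Fin d) (Fin d) ℂ) + H
      = (hH.eigenvectorUnitary : Matrix (Fin d) (Fin d) ℂ)
        * diagonal (fun i => ((c + hH.eigenvalues i : ℝ) : ℂ))
        * (star (hH.eigenvectorUnitary : Matrix (Fin d) (Fin d) ℂ)) := by
    rw [hdiag, mul_add, add_mul, mul_smul_comm, smul_mul_assoc, mul_one, hU]
    exact congrArg ((c : ℂ) • (1 : Matrix (Fin d) (Fin d) ℂ) + ·) hH.spectral_theorem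
  rw [hkey]
  have hd : (diagonal (fun i => ((c + hH.eigenvalues i : ℝ) : ℂ))).PosSemidef := by
    refine posSemidef_diagonal_iff.mpr fun i => ?_
    refine Complex.zero_le_real.2 ?_
    have h1 : |hH.eigenvalues i| ≤ c := by
      rw [hcdef]
      exact Finset.single_le_sum (fun j _ => abs_nonneg (hH.eigenvalues j)) (Finset.mem_univ i)
    linarith [neg_abs_le (hH.eigenvalues i)]
  have := hd.mul_mul_conjTranspose_same (hH.eigenvectorUnitary : Matrix (Fin d) (Fin d) ℂ)
  simpa [Matrix.star_eq_conjTranspose] using this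

lemma one_sub_eps {d : ℕ} {T : Matrix (Fin d) (Fin d) ℂ} (hT : T.IsHermitian) :
    ∃ ε : ℝ, 0 < ε ∧ ((1 : Matrix (Fin d) (Fin d) ℂ) - (ε : ℂ) • T).PosSemidef := by
  obtain ⟨c, hc0, hc⟩ := herm_shift hT.neg
  refine ⟨(c + 1)⁻¹, by positivity, ?_⟩
  have h1 : (((c + 1 : ℝ) : ℂ) • (1 : Matrix (Fin d) (Fin d) ℂ) + -T).PosSemidef := by
    have := hc.add (Matrix.PosSemidef.one (n := Fin d) (R := ℂ))
    have heq : (c : ℂ) • (1 : Matrix (Fin d) (Fin d) ℂ) + -T + 1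
        = ((c + 1 : ℝ) : ℂ) • (1 : Matrix (Fin d) (Fin d) ℂ) + -T := by
      push_cast; module
    rwa [heq] at this
  have h2 : (1 : Matrix (Fin d) (Fin d) ℂ) - (((c + 1)⁻¹ : ℝ) : ℂ) • T
      = (((c + 1)⁻¹ : ℝ) : ℂ) • (((c + 1 : ℝ) : ℂ) • (1 : Matrix (Fin d) (Fin d) ℂ) + -T) := by
    have hne : ((c + 1 : ℝ) : ℂ) ≠ 0 := by
      exact_mod_cast ne_of_gt (by positivity : (0:ℝ) < c + 1)
    rw [smul_add, smul_smul]
    push_cast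
    rw [inv_mul_cancel₀ (by exact_mod_cast hne)]
    module
  rw [h2]
  exact psd_smul_real h1 (by positivity)

/-- Every operator system `O ⊆ M_d(ℂ)` (a complex subspace containing `1` and closed under
conjugate transpose) is the span of the elements of a POVM with `dim_ℂ O` outcomes, and any POVM
whose elements span `O` has at least `dim_ℂ O` outcomes. -/
theorem operator_system_povm (d : ℕ) (O : Submodule ℂ (Matrix (Fin d) (Fin d) ℂ))
    (h_one : (1 : Matrix (Fin d) (Fin d) ℂ) ∈ O)
    (h_star : ∀ X ∈ O, Xᴴ ∈ O) :
    (∃ A : Fin (Module.finrank ℂ O) → Matrix (Fin d) (Fin d) ℂ,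
        IsPOVM A ∧ Submodule.span ℂ (Set.range A) = O) ∧
    (∀ (m : ℕ) (B : Fin m → Matrix (Fin d) (Fin d) ℂ),
        IsPOVM B → Submodule.span ℂ (Set.range B) = O → Module.finrank ℂ O ≤ m) := by
  classical
  constructor
  · -- existence
    by_cases hd : d = 0
    · subst hd
      refine ⟨fun _ => 0, ⟨fun j => Matrix.PosSemidef.zero, Subsingleton.elim _ _⟩,
        Subsingleton.elim _ _⟩
    · haveI : NeZero d := ⟨hd⟩
      set MM := Matrix (Fin d) (Fin d) ℂ
      have hone_ne : (1 : MM) ≠ 0 := one_ne_zero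
      set S : Set MM := {X | X ∈ O ∧ Xᴴ = X} with hSdef
      -- S spans O
      have hS_span : Submodule.span ℂ S = O := by
        apply le_antisymm
        · exact Submodule.span_le.2 fun X hX => hX.1
        · intro X hX
          have h1 : (X + Xᴴ) ∈ S :=
            ⟨O.add_mem hX (h_star X hX), by
              rw [conjTranspose_add, conjTranspose_conjTranspose, add_comm]⟩
          have h2 : (Complex.I • (X - Xᴴ)) ∈ S := by
            refine ⟨O.smul_mem _ (O.sub_mem hX (h_star X hX)), ?_⟩
            rw [conjTranspose_smul, conjTranspose_sub, conjTranspose_conjTranspose,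
              Complex.star_def, Complex.conj_I]
            module
          have hXeq : X = (2⁻¹ : ℂ) • (X + Xᴴ) + (-(Complex.I) / 2) • (Complex.I • (X - Xᴴ)) := by
            rw [smul_smul]
            have hI : -Complex.I / 2 * Complex.I = 2⁻¹ := by
              rw [div_mul_eq_mul_div, neg_mul, Complex.I_mul_I, neg_neg, one_div]
            rw [hI]
            module
          rw [hXeq]
          exact Submodule.add_mem _
            (Submodule.smul_mem _ _ (Submodule.subset_span h1))
            (Submodule.smul_mem _ _ (Submodule.subset_span h2))
      have h1S : ({1} : Set MM) ⊆ S := by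
        intro x hx
        rw [Set.mem_singleton_iff] at hx
        subst hx
        exact ⟨h_one, conjTranspose_one⟩
      have hli : LinearIndepOn ℂ id ({1} : Set MM) :=
        LinearIndepOn.singleton (v := id) hone_ne
      set b : Set MM := hli.extend h1S with hbdef
      have hbS : b ⊆ S := hli.extend_subset h1S
      have h1b : (1 : MM) ∈ b := hli.subset_extend h1S rfl
      have hbli : LinearIndependent ℂ ((↑) : b → MM) := hli.linearIndepOn_extend h1S
      have hspanb : Submodule.span ℂ b = O := by
        apply le_antisymm
        · exact Submodule.span_le.2 fun X hX => (hbS hX).1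
        · rw [← hS_span]
          exact Submodule.span_le.2 (hli.subset_span_extend h1S)
      haveI : Finite b := hbli.finite
      haveI : Fintype b := Fintype.ofFinite _
      have hcard : Fintype.card b = Module.finrank ℂ O := by
        rw [← hspanb, finrank_span_set_eq_card hbli, Set.toFinset_card]
      set n := Module.finrank ℂ O
      set e : Fin n ≃ b := (Fintype.equivFinOfCardEq hcard).symm with hedef
      -- shift constants
      have hcc : ∀ X ∈ S, ∃ c : ℝ, 0 ≤ c ∧ ((c : ℂ) • 1 + X).PosSemidef :=
        fun X hX => herm_shift hX.2
      choose! cc hcc0 hccpsd using hcc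
      set F : MM → MM := fun X => (cc X : ℂ) • 1 + X with hFdef
      set T : MM := ∑ X ∈ b.toFinset.erase 1, F X with hTdef
      have hFherm : ∀ X ∈ S, (F X)ᴴ = F X := by
        intro X hX
        simp only [hFdef]
        rw [conjTranspose_add, conjTranspose_smul, conjTranspose_one, hX.2]
        simp [Complex.conj_ofReal]
      have hT_herm : T.IsHermitian := by
        unfold Matrix.IsHermitian
        rw [hTdef, conjTranspose_sum]
        refine Finset.sum_congr rfl fun X hX => ?_
        exact hFherm X (hbS (by simpa using (Finset.mem_erase.mp hX).2))
      obtain ⟨ε, hε, hεT⟩ := one_sub_eps hT_herm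
      have hεC : (ε : ℂ) ≠ 0 := by exact_mod_cast ne_of_gt hε
      set A : Fin n → MM := fun j => if (e j : MM) = 1 then 1 - (ε : ℂ) • T
        else (ε : ℂ) • F (e j) with hAdef
      have hTO : T ∈ O := by
        rw [hTdef]
        refine Submodule.sum_mem _ fun X hX => ?_
        have hXO : X ∈ O := (hbS (by simpa using (Finset.mem_erase.mp hX).2)).1
        exact O.add_mem (O.smul_mem _ h_one) hXO
      have h1mem : (1 : MM) ∈ b.toFinset := Set.mem_toFinset.2 h1b
      have hsum : ∑ j, A j = 1 := by
        have hsum1 : ∑ j, A j = ∑ X ∈ b.toFinset,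
            (if X = 1 then 1 - (ε : ℂ) • T else (ε : ℂ) • F X) := by
          rw [Finset.sum_subtype b.toFinset (fun x => Set.mem_toFinset)
            (fun X => if X = 1 then 1 - (ε : ℂ) • T else (ε : ℂ) • F X)]
          exact Fintype.sum_equiv e _ _ (fun j => by simp only [hAdef])
        rw [hsum1, ← Finset.add_sum_erase _ _ h1mem, if_pos rfl]
        have h2 : ∑ X ∈ b.toFinset.erase 1,
            (if X = 1 then 1 - (ε : ℂ) • T else (ε : ℂ) • F X) = (ε : ℂ) • T := by
          rw [hTdef, Finset.smul_sum]
          exact Finset.sum_congr rfl fun X hX => if_neg (Finset.mem_erase.mp hX).1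
        rw [h2]
        abel
      refine ⟨A, ⟨?_, hsum⟩, ?_⟩
      · -- PSD
        intro j
        simp only [hAdef]
        by_cases h : (e j : MM) = 1
        · rw [if_pos h]; exact hεT
        · rw [if_neg h]
          exact psd_smul_real (hccpsd _ (hbS (e j).2)) hε.le
      · -- span
        have h1span : (1 : MM) ∈ Submodule.span ℂ (Set.range A) := by
          rw [← hsum]
          exact Submodule.sum_mem _ fun j _ => Submodule.subset_span ⟨j, rfl⟩
        apply le_antisymm
        · refine Submodule.span_le.2 ?_
          rintro _ ⟨j, rfl⟩
          simp only [hAdef]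
          by_cases h : (e j : MM) = 1
          · rw [if_pos h]
            exact O.sub_mem h_one (O.smul_mem _ hTO)
          · rw [if_neg h]
            refine O.smul_mem _ ?_
            exact O.add_mem (O.smul_mem _ h_one) (hbS (e j).2).1
        · rw [← hspanb]
          refine Submodule.span_le.2 ?_
          intro X hXb
          by_cases hX1 : X = 1
          · rw [hX1]; exact h1span
          · set j := e.symm ⟨X, hXb⟩ with hjdef
            have hej : (e j : MM) = X := by rw [hjdef]; simp
            have hAj : A j = (ε : ℂ) • F X := by
              simp only [hAdef]
              rw [hej, if_neg hX1]
            have hXeq : X = (ε : ℂ)⁻¹ • A j - (cc X : ℂ) • 1 := by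
              rw [hAj, smul_smul, inv_mul_cancel₀ hεC, one_smul]
              simp only [hFdef]
              abel
            rw [hXeq]
            exact Submodule.sub_mem _
              (Submodule.smul_mem _ _ (Submodule.subset_span ⟨j, rfl⟩))
              (Submodule.smul_mem _ _ h1span)
  · intro m B _ hspan
    rw [← hspan]
    exact (finrank_range_le_card B).trans (le_of_eq (Fintype.card_fin m))
end

section
/- Let d and r be natural numbers with 1 ≤ r and 2r < d. Then there exists a ℂ-linear subspace B of the d×d complex matrices such that: (a) B is closed under conjugate transpose; (b) every B ∈ B has trace 0; (c) dim_ℂ B = (d−2r)²; and (d) every nonzero B ∈ B has rank at least 2r+1. -/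
open Matrix Polynomial Finset

namespace HighRankAux

/-- Alternating binomial sums annihilate polynomials of low degree. -/
lemma alt_sum_poly (m : ℕ) (p : Polynomial ℂ) (hp : p = 0 ∨ p.natDegree < m) :
    ∑ i ∈ Finset.range (m + 1), (-1 : ℂ) ^ i * (m.choose i : ℂ) * p.eval (i : ℂ) = 0 := by
  induction m generalizing p with
  | zero =>
    rcases hp with rfl | h
    · simp
    · omega
  | succ m ih =>
    rcases eq_or_ne p 0 with rfl | hp0
    · simp
    have hdeg : p.natDegree < m + 1 := by
      rcases hp with h | h
      · exact absurd h hp0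
      · exact h
    -- rewrite the sum as an alternating (m)-sum of the difference polynomial
    set q : Polynomial ℂ := p - p.comp (X + C 1) with hq
    have hqev : ∀ i : ℕ, q.eval (i : ℂ) = p.eval (i : ℂ) - p.eval ((i : ℂ) + 1) := by
      intro i
      simp [hq, eval_comp]
    have key : ∑ i ∈ Finset.range (m + 2), (-1 : ℂ) ^ i * ((m+1).choose i : ℂ) * p.eval (i : ℂ)
        = ∑ i ∈ Finset.range (m + 1), (-1 : ℂ) ^ i * (m.choose i : ℂ) * q.eval (i : ℂ) := by
      rw [Finset.sum_range_succ' _ (m + 1)]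
      have e1 : ∀ i : ℕ, ((m+1).choose (i+1) : ℂ) = (m.choose i : ℂ) + (m.choose (i+1) : ℂ) := by
        intro i; rw [Nat.choose_succ_succ]; push_cast; ring
      have split : ∑ i ∈ Finset.range (m + 1),
            (-1 : ℂ) ^ (i+1) * ((m+1).choose (i+1) : ℂ) * p.eval ((i+1 : ℕ) : ℂ)
          = (∑ i ∈ Finset.range (m + 1),
              -((-1 : ℂ) ^ i * (m.choose i : ℂ) * p.eval ((i : ℂ) + 1)))
            + ∑ i ∈ Finset.range (m + 1),
              (-1 : ℂ) ^ (i+1) * (m.choose (i+1) : ℂ) * p.eval ((i+1 : ℕ) : ℂ) := by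
        rw [← Finset.sum_add_distrib]
        refine Finset.sum_congr rfl fun i _ => ?_
        rw [e1]
        push_cast
        ring
      rw [split]
      have tail : (∑ i ∈ Finset.range (m + 1),
            (-1 : ℂ) ^ (i+1) * (m.choose (i+1) : ℂ) * p.eval ((i+1 : ℕ) : ℂ))
            + (-1 : ℂ) ^ (0:ℕ) * ((m+1).choose 0 : ℂ) * p.eval ((0:ℕ) : ℂ)
          = ∑ i ∈ Finset.range (m + 1), (-1 : ℂ) ^ i * (m.choose i : ℂ) * p.eval (i : ℂ) := by
        have : ∑ i ∈ Finset.range (m + 2), (-1 : ℂ) ^ i * (m.choose i : ℂ) * p.eval (i : ℂ)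
            = ∑ i ∈ Finset.range (m + 1), (-1 : ℂ) ^ i * (m.choose i : ℂ) * p.eval (i : ℂ) := by
          rw [Finset.sum_range_succ]
          simp [Nat.choose_eq_zero_of_lt (Nat.lt_succ_self m)]
        rw [← this, Finset.sum_range_succ' _ (m + 1)]
        simp
      rw [add_assoc, tail]
      rw [← Finset.sum_add_distrib]
      refine Finset.sum_congr rfl fun i _ => ?_
      rw [hqev]
      ring
    rw [key]
    refine ih q ?_
    rcases eq_or_ne q 0 with h0 | hq0
    · exact Or.inl h0
    right
    have hcomp_ne : p.comp (X + C 1) ≠ 0 := by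
      intro h
      apply hp0
      apply Polynomial.zero_of_eval_zero
      intro z
      have h2 := congrArg (Polynomial.eval (z - 1)) h
      simpa [eval_comp] using h2
    have hdcomp : (p.comp (X + C 1)).degree = p.degree := by
      rw [degree_eq_natDegree hcomp_ne, degree_eq_natDegree hp0, natDegree_comp,
        natDegree_X_add_C, mul_one]
    have hlc : p.leadingCoeff = (p.comp (X + C 1)).leadingCoeff := by
      rw [leadingCoeff_comp (by rw [natDegree_X_add_C]; norm_num)]
      have : (X + C (1:ℂ)).leadingCoeff = 1 := (monic_X_add_C (1:ℂ)).leadingCoeff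
      rw [this, one_pow, mul_one]
    have hlt : q.degree < p.degree := degree_sub_lt hdcomp.symm hp0 hlc
    have : q.natDegree < p.natDegree := natDegree_lt_natDegree hq0 hlt
    omega

/-- Alternating binomial sums annihilate small powers. -/
lemma alt_sum_pow (m a : ℕ) (ha : a < m) :
    ∑ i ∈ Finset.range (m + 1), (-1 : ℂ) ^ i * (m.choose i : ℂ) * ((i : ℂ)) ^ a = 0 := by
  have := alt_sum_poly m (X ^ a) (Or.inr (by simpa using ha))
  simpa using this


variable {n : ℕ}

/-- extend a small matrix by zero to all of ℕ × ℕ -/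
def ext (c : Matrix (Fin n) (Fin n) ℂ) (u v : ℕ) : ℂ :=
  if h : u < n ∧ v < n then c ⟨u, h.1⟩ ⟨v, h.2⟩ else 0

lemma ext_add (c c' : Matrix (Fin n) (Fin n) ℂ) (u v : ℕ) :
    ext (c + c') u v = ext c u v + ext c' u v := by
  unfold ext; split <;> simp [Matrix.add_apply]

lemma ext_smul (s : ℂ) (c : Matrix (Fin n) (Fin n) ℂ) (u v : ℕ) :
    ext (s • c) u v = s * ext c u v := by
  unfold ext; split <;> simp [Matrix.smul_apply, smul_eq_mul]

lemma ext_conj (c : Matrix (Fin n) (Fin n) ℂ) (u v : ℕ) :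
    ext cᴴ u v = star (ext c v u) := by
  unfold ext
  by_cases h1 : u < n <;> by_cases h2 : v < n <;>
    simp [h1, h2, Matrix.conjTranspose_apply, and_comm]

/-- weights: alternating binomials on the main diagonal, 1 elsewhere -/
noncomputable def wt (d i j : ℕ) : ℂ :=
  if i = j then (-1 : ℂ) ^ i * ((d - 1).choose i : ℂ) else 1

lemma wt_symm (d i j : ℕ) : wt d j i = wt d i j := by
  unfold wt
  by_cases h : i = j <;> simp [h, eq_comm]

lemma star_wt (d i j : ℕ) : star (wt d i j) = wt d i j := by
  unfold wt
  split <;> simp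

lemma wt_ne_zero (d i j : ℕ) (hi : i < d) : wt d i j ≠ 0 := by
  unfold wt
  split
  · apply mul_ne_zero (pow_ne_zero _ (by norm_num))
    exact Nat.cast_ne_zero.2 (Nat.choose_pos (by omega)).ne'
  · exact one_ne_zero

/-- the matrix associated to a coefficient matrix -/
noncomputable def phi (d : ℕ) (c : Matrix (Fin n) (Fin n) ℂ) : Matrix (Fin d) (Fin d) ℂ :=
  fun i j => wt d i j * ∑ a ∈ Finset.range n,
    ext c (a + ((j : ℕ) - (i : ℕ))) (a + ((i : ℕ) - (j : ℕ))) * ((min (i : ℕ) (j : ℕ) : ℕ) : ℂ) ^ a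

/-- phi as a linear map -/
noncomputable def Phi (d n : ℕ) : Matrix (Fin n) (Fin n) ℂ →ₗ[ℂ] Matrix (Fin d) (Fin d) ℂ where
  toFun c := phi d c
  map_add' c c' := by
    funext i j
    simp only [phi, Matrix.add_apply, ext_add, add_mul, Finset.sum_add_distrib, mul_add]
  map_smul' s c := by
    funext i j
    simp only [phi, Matrix.smul_apply, ext_smul, RingHom.id_apply, smul_eq_mul,
      Finset.mul_sum]
    refine Finset.sum_congr rfl fun a _ => by ring

lemma phi_conjTranspose (d : ℕ) (c : Matrix (Fin n) (Fin n) ℂ) :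
    (phi d c)ᴴ = phi d cᴴ := by
  funext i j
  simp only [Matrix.conjTranspose_apply, phi]
  rw [star_mul', star_wt, wt_symm]
  congr 1
  rw [star_sum]
  refine Finset.sum_congr rfl fun a _ => ?_
  rw [star_mul', ext_conj]
  have : star (((min (j : ℕ) (i : ℕ) : ℕ) : ℂ) ^ a) = ((min (i : ℕ) (j : ℕ) : ℕ) : ℂ) ^ a := by
    rw [min_comm]
    simp
  rw [this]

lemma phi_trace (d : ℕ) (hd : n + 2 ≤ d) (c : Matrix (Fin n) (Fin n) ℂ) :
    (phi d c).trace = 0 := by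
  have h1 : (phi d c).trace = ∑ i : Fin d, wt d i i * ∑ a ∈ Finset.range n,
      ext c a a * ((i : ℕ) : ℂ) ^ a := by
    simp [Matrix.trace, Matrix.diag, phi]
  rw [h1]
  have h2 : ∀ i : Fin d, wt d i i * (∑ a ∈ Finset.range n, ext c a a * ((i : ℕ) : ℂ) ^ a)
      = ∑ a ∈ Finset.range n, ext c a a * ((-1:ℂ)^(i:ℕ) * ((d-1).choose i : ℂ) * ((i : ℕ) : ℂ) ^ a) := by
    intro i
    rw [Finset.mul_sum]
    refine Finset.sum_congr rfl fun a _ => ?_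
    simp only [wt, eq_self_iff_true, if_true]
    ring
  simp only [h2]
  rw [Finset.sum_comm]
  refine Finset.sum_eq_zero fun a ha => ?_
  rw [← Finset.mul_sum]
  have h3 : ∑ i : Fin d, (-1:ℂ)^(i:ℕ) * ((d-1).choose i : ℂ) * ((i : ℕ) : ℂ) ^ a = 0 := by
    rw [Fin.sum_univ_eq_sum_range (fun i => (-1:ℂ)^i * ((d-1).choose i : ℂ) * ((i:ℕ) : ℂ) ^ a)]
    have hd1 : d - 1 + 1 = d := by omega
    rw [← hd1]
    exact alt_sum_pow (d-1) a (by simp only [Finset.mem_range] at ha; omega)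
  rw [h3, mul_zero]


/-- the polynomial carried by the diagonal (α, β) (intended: α * β = 0) -/
noncomputable def diagPoly (c : Matrix (Fin n) (Fin n) ℂ) (α β : ℕ) : Polynomial ℂ :=
  ∑ a ∈ Finset.range (n - α - β), Polynomial.C (ext c (a + α) (a + β)) * X ^ a

lemma diagPoly_coeff (c : Matrix (Fin n) (Fin n) ℂ) (α β b : ℕ) :
    (diagPoly c α β).coeff b =
      if b ∈ Finset.range (n - α - β) then ext c (b + α) (b + β) else 0 := by
  simp only [diagPoly, Polynomial.finset_sum_coeff, Polynomial.coeff_C_mul,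
    Polynomial.coeff_X_pow, mul_ite, mul_one, mul_zero]
  rw [Finset.sum_ite_eq (Finset.range (n - α - β)) b (fun a => ext c (a + α) (a + β))]

lemma diagPoly_natDegree (c : Matrix (Fin n) (Fin n) ℂ) (α β : ℕ) :
    (diagPoly c α β).natDegree ≤ n - α - β - 1 ∨ diagPoly c α β = 0 := by
  rcases Nat.eq_zero_or_pos (n - α - β) with h | h
  · right
    unfold diagPoly
    rw [h]
    simp
  · left
    refine Polynomial.natDegree_sum_le_of_forall_le _ _ fun a ha => ?_
    refine (Polynomial.natDegree_C_mul_X_pow_le _ _).trans ?_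
    simp only [Finset.mem_range] at ha
    omega

/-- the entry of `phi d c` at position `(x + β, x + α)` -/
lemma phi_apply_diag (d : ℕ) (c : Matrix (Fin n) (Fin n) ℂ) (α β x : ℕ)
    (hαβ : α = 0 ∨ β = 0) (hi : x + β < d) (hj : x + α < d) :
    phi d c ⟨x + β, hi⟩ ⟨x + α, hj⟩
      = wt d (x + β) (x + α) * (diagPoly c α β).eval (x : ℂ) := by
  have e1 : (x + α) - (x + β) = α - β := by omega
  have e2 : (x + β) - (x + α) = β - α := by omega
  have e3 : α - β = α := by omega
  have e4 : β - α = β := by omega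
  have e5 : min (x + β) (x + α) = x := by omega
  simp only [phi, e1, e2, e3, e4, e5]
  congr 1
  have hsub : Finset.range (n - α - β) ⊆ Finset.range n := Finset.range_subset_range.2 (by omega)
  unfold diagPoly
  rw [Polynomial.eval_finset_sum]
  simp only [Polynomial.eval_mul, Polynomial.eval_C, Polynomial.eval_pow, Polynomial.eval_X]
  refine (Finset.sum_subset hsub fun a _ ha => ?_).symm
  have : ¬(a + α < n ∧ a + β < n) := by
    simp only [Finset.mem_range] at ha ⊢
    omega
  unfold ext
  rw [dif_neg this, zero_mul]

/-- `Phi` is injective -/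
lemma phi_inj (d n : ℕ) (hd : n ≤ d) : Function.Injective (Phi d n) := by
  rw [injective_iff_map_eq_zero]
  intro c hc
  ext u v
  simp only [Matrix.zero_apply]
  set α := (u : ℕ) - (v : ℕ) with hα
  set β := (v : ℕ) - (u : ℕ) with hβ
  have hαβ : α = 0 ∨ β = 0 := by omega
  set a0 := min (u : ℕ) (v : ℕ) with ha0
  have hu : a0 + α = (u : ℕ) := by omega
  have hv : a0 + β = (v : ℕ) := by omega
  have hP : diagPoly c α β = 0 := by
    apply Polynomial.eq_zero_of_natDegree_lt_card_of_eval_eq_zero' _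
      ((Finset.range (d - α - β)).image (Nat.cast : ℕ → ℂ))
    · intro z hz
      simp only [Finset.mem_image, Finset.mem_range] at hz
      obtain ⟨x, hx, rfl⟩ := hz
      have hi : x + β < d := by omega
      have hj : x + α < d := by omega
      have := phi_apply_diag d c α β x hαβ hi hj
      have hzero : phi d c ⟨x + β, hi⟩ ⟨x + α, hj⟩ = 0 := by
        have : Phi d n c = 0 := hc
        rw [show phi d c = Phi d n c from rfl, this, Matrix.zero_apply]
      rw [hzero] at this
      have hwt := wt_ne_zero d (x + β) (x + α) hi
      exact (mul_eq_zero.1 this.symm).resolve_left hwt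
    · rw [Finset.card_image_of_injective _ Nat.cast_injective, Finset.card_range]
      have hv' : (v : ℕ) < n := v.isLt
      have hu' : (u : ℕ) < n := u.isLt
      rcases diagPoly_natDegree c α β with h | h
      · omega
      · rw [h]
        simp only [natDegree_zero]
        omega
  have := diagPoly_coeff c α β a0
  rw [hP] at this
  simp only [Polynomial.coeff_zero] at this
  have hmem : a0 ∈ Finset.range (n - α - β) := by
    simp only [Finset.mem_range]
    have hv' : (v : ℕ) < n := v.isLt
    have hu' : (u : ℕ) < n := u.isLt
    omega
  rw [if_pos hmem] at this
  unfold ext at this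
  have hcond : a0 + α < n ∧ a0 + β < n := by
    constructor <;> [rw [hu]; rw [hv]] <;> simp [Fin.isLt]
  rw [dif_pos hcond] at this
  have hfin : c u v = c ⟨a0 + α, hcond.1⟩ ⟨a0 + β, hcond.2⟩ := by
    congr 1 <;> exact (Fin.ext (by simp only [Fin.val_mk]; omega)).symm
  rw [hfin]
  exact this.symm


lemma phi_rank (d n : ℕ) (hd : n ≤ d) (c : Matrix (Fin n) (Fin n) ℂ) (hc : c ≠ 0) :
    d - n + 1 ≤ (phi d c).rank := by
  classical
  have hT : ∃ p : Fin n × Fin n, c p.1 p.2 ≠ 0 := by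
    by_contra h
    push_neg at h
    exact hc (by ext u v; simpa using h (u, v))
  set T : Finset (Fin n × Fin n) := Finset.univ.filter (fun p => c p.1 p.2 ≠ 0) with hTdef
  have hTne : T.Nonempty := by
    obtain ⟨p, hp⟩ := hT
    exact ⟨p, by simp [hTdef, hp]⟩
  obtain ⟨p0, hp0T, hmin⟩ := Finset.exists_min_image T (fun p => (p.1 : ℤ) - (p.2 : ℤ)) hTne
  have hc0 : c p0.1 p0.2 ≠ 0 := by
    have := hp0T
    simp only [hTdef, Finset.mem_filter] at this
    exact this.2
  set u0 := p0.1 with hu0def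
  set v0 := p0.2 with hv0def
  set α := (u0 : ℕ) - (v0 : ℕ) with hαdef
  set β := (v0 : ℕ) - (u0 : ℕ) with hβdef
  have hαβ : α = 0 ∨ β = 0 := by omega
  set a0 := min (u0 : ℕ) (v0 : ℕ) with ha0def
  set P := diagPoly c α β with hPdef
  set k := n - α - β with hkdef
  set L := d - α - β with hLdef
  have hu0 : a0 + α = (u0 : ℕ) := by omega
  have hv0 : a0 + β = (v0 : ℕ) := by omega
  have hun : (u0 : ℕ) < n := u0.isLt
  have hvn : (v0 : ℕ) < n := v0.isLt
  have ha0k : a0 < k := by omega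
  have hPne : P ≠ 0 := by
    intro h
    have hco := diagPoly_coeff c α β a0
    rw [← hPdef, h, Polynomial.coeff_zero, if_pos (Finset.mem_range.2 ha0k)] at hco
    unfold ext at hco
    have hcond : a0 + α < n ∧ a0 + β < n := ⟨by omega, by omega⟩
    rw [dif_pos hcond] at hco
    apply hc0
    rw [show c u0 v0 = c ⟨a0 + α, hcond.1⟩ ⟨a0 + β, hcond.2⟩ from by
      congr 1 <;> exact (Fin.ext (by simp only [Fin.val_mk]; omega)).symm]
    exact hco.symm
  have hPdeg : P.natDegree ≤ k - 1 := by
    rcases diagPoly_natDegree c α β with h | h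
    · exact h
    · exact absurd h hPne
  set S := (Finset.range L).filter (fun x : ℕ => P.eval ((x : ℕ) : ℂ) ≠ 0) with hSdef
  set Z := (Finset.range L).filter (fun x : ℕ => P.eval ((x : ℕ) : ℂ) = 0) with hZdef
  have hZcard : Z.card ≤ k - 1 := by
    have hinj : Set.InjOn (fun x : ℕ => (x : ℂ)) Z := fun a _ b _ h => Nat.cast_injective h
    have hsub : Z.image (fun x : ℕ => (x : ℂ)) ⊆ P.roots.toFinset := by
      intro z hz
      simp only [Finset.mem_image] at hz
      obtain ⟨x, hx, rfl⟩ := hz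
      simp only [hZdef, Finset.mem_filter] at hx
      rw [Multiset.mem_toFinset, Polynomial.mem_roots hPne]
      exact hx.2
    calc Z.card = (Z.image (fun x : ℕ => (x : ℂ))).card :=
          (Finset.card_image_of_injOn hinj).symm
      _ ≤ P.roots.toFinset.card := Finset.card_le_card hsub
      _ ≤ Multiset.card P.roots := Multiset.toFinset_card_le _
      _ ≤ P.natDegree := Polynomial.card_roots' P
      _ ≤ k - 1 := hPdeg
  have hSZ : Z.card + S.card = L := by
    rw [hZdef, hSdef]
    have h := Finset.card_filter_add_card_filter_not
      (s := Finset.range L) (fun x : ℕ => P.eval ((x : ℕ) : ℂ) = 0)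
    simpa [Finset.card_range] using h
  have hScard : d - n + 1 ≤ S.card := by omega
  set M := S.card with hMdef
  set x : Fin M ↪o ℕ := S.orderEmbOfFin rfl with hxdef
  have hxS : ∀ l : Fin M, x l ∈ S := fun l => Finset.orderEmbOfFin_mem S rfl l
  have hxL : ∀ l : Fin M, x l < L := by
    intro l
    have := hxS l
    simp only [hSdef, Finset.mem_filter, Finset.mem_range] at this
    exact this.1
  have hxev : ∀ l : Fin M, P.eval ((x l : ℕ) : ℂ) ≠ 0 := by
    intro l
    have := hxS l
    simp only [hSdef, Finset.mem_filter] at this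
    exact this.2
  have hαβn : α + β < n := by omega
  have hρb : ∀ l : Fin M, x l + β < d := by intro l; have := hxL l; omega
  have hκb : ∀ l : Fin M, x l + α < d := by intro l; have := hxL l; omega
  set ρ : Fin M → Fin d := fun l => ⟨x l + β, hρb l⟩ with hρdef
  set κ : Fin M → Fin d := fun l => ⟨x l + α, hκb l⟩ with hκdef
  set Q : Matrix (Fin M) (Fin M) ℂ := Matrix.of (fun l m => phi d c (ρ l) (κ m)) with hQdef
  -- triangularity
  have htri : Q.BlockTriangular id := by
    intro l m hlm
    have hxx : x m < x l := x.strictMono hlm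
    show phi d c (ρ l) (κ m) = 0
    simp only [phi, hρdef, hκdef]
    rw [mul_eq_zero]
    right
    refine Finset.sum_eq_zero fun a _ => ?_
    rw [mul_eq_zero]
    left
    unfold ext
    split
    · next h =>
      by_contra hne
      have hmem : (⟨⟨_, h.1⟩, ⟨_, h.2⟩⟩ : Fin n × Fin n) ∈ T := by
        simp only [hTdef, Finset.mem_filter, Finset.mem_univ, true_and]
        exact hne
      have hle := hmin _ hmem
      simp only [Fin.val_mk] at hle
      omega
    · rfl
  have hdiag : ∀ l : Fin M, Q l l ≠ 0 := by
    intro l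
    show phi d c (ρ l) (κ l) ≠ 0
    simp only [hρdef, hκdef]
    rw [phi_apply_diag d c α β (x l) hαβ (hρb l) (hκb l)]
    exact mul_ne_zero (wt_ne_zero d _ _ (hρb l)) (hxev l)
  have hdet : Q.det ≠ 0 := by
    rw [Matrix.det_of_upperTriangular htri]
    exact Finset.prod_ne_zero_iff.2 fun l _ => hdiag l
  have hQrank : Q.rank = M := by
    rw [Matrix.rank_of_isUnit Q ((Matrix.isUnit_iff_isUnit_det Q).2 (isUnit_iff_ne_zero.2 hdet))]
    exact Fintype.card_fin M
  -- Q = E * (phi d c * F)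
  set E : Matrix (Fin M) (Fin d) ℂ := Matrix.of (fun l i => if ρ l = i then (1:ℂ) else 0) with hEdef
  set F : Matrix (Fin d) (Fin M) ℂ := Matrix.of (fun j m => if κ m = j then (1:ℂ) else 0) with hFdef
  have hEF : Q = E * (phi d c * F) := by
    ext l m
    simp only [hQdef, hEdef, hFdef, Matrix.mul_apply, Matrix.of_apply, ite_mul, one_mul, zero_mul,
      mul_ite, mul_one, mul_zero, Finset.sum_ite_eq, Finset.mem_univ, if_true]
  have hrank : Q.rank ≤ (phi d c).rank := by
    rw [hEF]
    exact le_trans (Matrix.rank_mul_le_right E (phi d c * F)) (Matrix.rank_mul_le_left (phi d c) F)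
  omega


lemma Phi_apply (d n : ℕ) (c : Matrix (Fin n) (Fin n) ℂ) : Phi d n c = phi d c := rfl

end HighRankAux

open HighRankAux in
/-- The matrix-subspace construction in the proof of Prop. 5: for `1 ≤ r < d/2` there is a
complex subspace `B` of `d × d` matrices, closed under conjugate transpose, consisting of
traceless matrices, of dimension `(d - 2r)²`, all of whose nonzero elements have rank at least
`2r + 1`. -/
theorem exists_high_rank_traceless_subspace (d r : ℕ) (hr : 1 ≤ r) (hrd : 2 * r < d) :
    ∃ B : Submodule ℂ (Matrix (Fin d) (Fin d) ℂ),
      (∀ X ∈ B, Xᴴ ∈ B) ∧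
      (∀ X ∈ B, X.trace = 0) ∧
      Module.finrank ℂ B = (d - 2 * r) ^ 2 ∧
      (∀ X ∈ B, X ≠ 0 → 2 * r + 1 ≤ X.rank) := by
  classical
  refine ⟨LinearMap.range (Phi d (d - 2 * r)), ?_, ?_, ?_, ?_⟩
  · rintro X ⟨c, rfl⟩
    exact ⟨cᴴ, by rw [Phi_apply, Phi_apply, phi_conjTranspose]⟩
  · rintro X ⟨c, rfl⟩
    rw [Phi_apply]
    exact phi_trace d (by omega) c
  · rw [LinearMap.finrank_range_of_inj (phi_inj d (d - 2 * r) (by omega))]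
    rw [Module.finrank_matrix]
    simp [Fintype.card_fin]
    rw [pow_two]
  · rintro X ⟨c, rfl⟩ hX
    rw [Phi_apply] at hX ⊢
    have hc : c ≠ 0 := by
      intro h
      apply hX
      rw [← Phi_apply, h, map_zero]
    have h1 := phi_rank d (d - 2 * r) (by omega) c hc
    have h2 : d - (d - 2 * r) + 1 = 2 * r + 1 := by omega
    omega
end

section
/- Let A be a POVM with n outcomes on ℂ^d. Then A is informationally complete with respect to the set of pure states if and only if every nonzero selfadjoint matrix T ∈ Matrix (Fin d) (Fin d) ℂ satisfying trace(T * A j) = 0 for all j has rank T ≥ 3. -/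
open Matrix
open scoped ComplexOrder

/-- A state on `ℂ^d`: a positive semidefinite matrix with trace 1. -/
def IsState {d : ℕ} (ρ : Matrix (Fin d) (Fin d) ℂ) : Prop :=
  ρ.PosSemidef ∧ ρ.trace = 1

/-- A family of matrices (e.g. a POVM or a collection of selfadjoint operators) is
informationally complete w.r.t. a set `P` of states if the expectation values
`trace (ρ * A j)` separate the points of `P`. -/
def IsIC {d n : ℕ} (A : Fin n → Matrix (Fin d) (Fin d) ℂ)
    (P : Set (Matrix (Fin d) (Fin d) ℂ)) : Prop :=
  ∀ ρ₁ ∈ P, ∀ ρ₂ ∈ P, (∀ j, (ρ₁ * A j).trace = (ρ₂ * A j).trace) → ρ₁ = ρ₂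

/-- The set of pure states on `ℂ^d`: states of rank 1. -/
def PureStates (d : ℕ) : Set (Matrix (Fin d) (Fin d) ℂ) :=
  {ρ | IsState ρ ∧ ρ.rank = 1}

section Aux
variable {d : ℕ}

private lemma myVecMulVec_mulVec (w x y : Fin d → ℂ) :
    vecMulVec w x *ᵥ y = (x ⬝ᵥ y) • w := by
  ext i
  simp only [mulVec, dotProduct, vecMulVec_apply, Pi.smul_apply, smul_eq_mul, Finset.sum_mul]
  exact Finset.sum_congr rfl fun k _ => by ring

private lemma trace_vmv_mul (v : Fin d → ℂ) (B : Matrix (Fin d) (Fin d) ℂ) :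
    (vecMulVec v (star v) * B).trace = star v ⬝ᵥ (B *ᵥ v) := by
  simp only [trace, diag_apply, mul_apply, vecMulVec_apply, dotProduct, mulVec, Pi.star_apply,
    Finset.mul_sum]
  rw [Finset.sum_comm]
  exact Finset.sum_congr rfl fun k _ => Finset.sum_congr rfl fun i _ => by ring

private lemma vmv_herm (v : Fin d → ℂ) : (vecMulVec v (star v)).IsHermitian := by
  ext i k
  simp [conjTranspose_apply, vecMulVec_apply, mul_comm]

private lemma vmv_psd (v : Fin d → ℂ) : (vecMulVec v (star v)).PosSemidef := by
  refine posSemidef_iff_dotProduct_mulVec.mpr ⟨vmv_herm v, fun x => ?_⟩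
  have hsx : star x ⬝ᵥ v = star (star v ⬝ᵥ x) := star_dotProduct _ _
  rw [myVecMulVec_mulVec, dotProduct_smul, hsx, smul_eq_mul]
  exact mul_star_self_nonneg _

private lemma vmv_trace (v : Fin d → ℂ) : (vecMulVec v (star v)).trace = star v ⬝ᵥ v := by
  simp [trace, diag, vecMulVec_apply, dotProduct, mul_comm]

private lemma vmv_rank_le (v w : Fin d → ℂ) : (vecMulVec v w).rank ≤ 1 := by
  rw [vecMulVec_eq Unit]
  calc (replicateCol Unit v * replicateRow Unit w).rank ≤ (replicateCol Unit v).rank := rank_mul_le_left _ _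
    _ ≤ Fintype.card Unit := rank_le_card_width _
    _ = 1 := Fintype.card_unit

private lemma rank_pos_of_ne_zero (A : Matrix (Fin d) (Fin d) ℂ) (h : A ≠ 0) : 1 ≤ A.rank := by
  by_contra hc
  push_neg at hc
  have h0 : A.rank = 0 := Nat.lt_one_iff.mp hc
  apply h
  have hbot : LinearMap.range A.mulVecLin = ⊥ := Submodule.finrank_eq_zero.mp h0
  ext i j
  have hz : A.mulVecLin (Pi.single j 1) = 0 := by
    have : A.mulVecLin (Pi.single j 1) ∈ LinearMap.range A.mulVecLin :=
      LinearMap.mem_range_self _ _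
    rwa [hbot, Submodule.mem_bot] at this
  have := congrFun hz i
  simpa [mulVecLin_apply, mulVec_single] using this

private lemma matrix_rank_sub_le (A B : Matrix (Fin d) (Fin d) ℂ) :
    (A - B).rank ≤ A.rank + B.rank := by
  have hr : LinearMap.range (A - B).mulVecLin ≤
      LinearMap.range A.mulVecLin ⊔ LinearMap.range B.mulVecLin := by
    rintro x ⟨y, rfl⟩
    have hxy : (A - B).mulVecLin y = A.mulVecLin y + (- B.mulVecLin y) := by
      simp [mulVecLin_apply, sub_mulVec, sub_eq_add_neg, neg_mulVec]
    rw [hxy]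
    exact Submodule.add_mem_sup (LinearMap.mem_range_self _ y)
      (Submodule.neg_mem _ (LinearMap.mem_range_self _ y))
  exact le_trans (Submodule.finrank_mono hr)
    (Submodule.finrank_add_le_finrank_add_finrank _ _)

end Aux

/-- Cor. 7 of the paper: a POVM `A` is informationally complete w.r.t. the pure states iff every
nonzero selfadjoint matrix orthogonal (in the Hilbert–Schmidt sense) to all POVM elements has
rank at least 3. -/

theorem pure_state_ic_iff_rank_ge_three (d n : ℕ) (A : Fin n → Matrix (Fin d) (Fin d) ℂ)
    (hA : IsPOVM A) :
    IsIC A (PureStates d) ↔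
      ∀ T : Matrix (Fin d) (Fin d) ℂ, T.IsHermitian → T ≠ 0 →
        (∀ j, (T * A j).trace = 0) → 3 ≤ T.rank := by
  constructor
  · -- IC → rank ≥ 3
    intro hIC T hT hT0 hTr
    by_contra hrank
    push_neg at hrank
    classical
    set U : Matrix (Fin d) (Fin d) ℂ := (hT.eigenvectorUnitary : Matrix (Fin d) (Fin d) ℂ) with hU
    set μ : Fin d → ℝ := hT.eigenvalues with hμdef
    set v : Fin d → Fin d → ℂ := fun m i => U i m with hv
    set ρ : Fin d → Matrix (Fin d) (Fin d) ℂ := fun m => vecMulVec (v m) (star (v m)) with hρ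
    have hUU : star U * U = 1 := Unitary.coe_star_mul_self hT.eigenvectorUnitary
    have horth : ∀ a b, star (v a) ⬝ᵥ v b = if a = b then 1 else 0 := by
      intro a b
      have h := congrFun (congrFun hUU a) b
      simpa [Matrix.mul_apply, Matrix.star_apply, dotProduct, Matrix.one_apply] using h
    -- key trace identity
    have hK : ∀ B : Matrix (Fin d) (Fin d) ℂ,
        (T * B).trace = ∑ m, (μ m : ℂ) * (ρ m * B).trace := by
      intro B
      have h1 : ∀ m, (ρ m * B).trace = ((star U * B) * U) m m := by
        intro m
        rw [hρ, trace_vmv_mul]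
        simp only [Matrix.mul_apply, dotProduct, Matrix.mulVec, Matrix.star_apply, Pi.star_apply,
          Finset.sum_mul, Finset.mul_sum, hv]
        rw [Finset.sum_comm]
        exact Finset.sum_congr rfl fun i _ => Finset.sum_congr rfl fun k _ => by ring
      calc (T * B).trace
          = ((diagonal (RCLike.ofReal ∘ μ)) * ((star U * B) * U)).trace := by
            conv_lhs => rw [hT.spectral_theorem, Unitary.conjStarAlgAut_apply]
            rw [Matrix.mul_assoc, Matrix.mul_assoc, trace_mul_comm]
            simp only [Matrix.mul_assoc, hU, hμdef]
        _ = ∑ m, (μ m : ℂ) * ((star U * B) * U) m m := by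
            simp [Matrix.trace, Matrix.diag, Matrix.diagonal_mul, Function.comp]
        _ = ∑ m, (μ m : ℂ) * (ρ m * B).trace := by
            exact Finset.sum_congr rfl fun m _ => by rw [h1]
    have hρtr : ∀ m, (ρ m).trace = 1 := by
      intro m
      rw [hρ, vmv_trace]
      simpa using horth m m
    -- trace of T is zero
    have htrace : ∑ m, (μ m : ℂ) = 0 := by
      have h1 : (T * (1 : Matrix (Fin d) (Fin d) ℂ)).trace = 0 := by
        rw [← hA.2, Finset.mul_sum, trace_sum]
        exact Finset.sum_eq_zero fun j _ => hTr j
      have h2 := hK 1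
      rw [h1] at h2
      simp only [mul_one, hρtr] at h2
      simpa using h2.symm
    -- the set of nonzero eigenvalues
    set S : Finset (Fin d) := Finset.univ.filter (fun m => μ m ≠ 0) with hS
    have hScard : S.card = T.rank := by
      rw [hT.rank_eq_card_non_zero_eigs, hS, ← Fintype.card_subtype]
    have hmemS : ∀ m, m ∈ S ↔ μ m ≠ 0 := by
      intro m; simp [hS]
    have hrestrict : ∀ f : Fin d → ℂ, (∀ m, μ m = 0 → f m = 0) →
        ∑ m, f m = ∑ m ∈ S, f m := by
      intro f hf
      refine (Finset.sum_subset (Finset.subset_univ S) fun m _ hm => ?_).symm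
      exact hf m (by simpa [hS] using hm)
    have hSne : S.Nonempty := by
      rw [Finset.nonempty_iff_ne_empty]
      intro hSe
      apply hT0
      have hμ0 : ∀ m, μ m = 0 := by
        intro m
        by_contra hm
        have : m ∈ S := (hmemS m).mpr hm
        simp [hSe] at this
      have hdiag : diagonal (RCLike.ofReal ∘ μ) = (0 : Matrix (Fin d) (Fin d) ℂ) := by
        ext i j
        by_cases hij : i = j <;> simp [diagonal, hμ0, hij]
      rw [hT.spectral_theorem, hdiag]
      simp
    have hcard12 : S.card = 1 ∨ S.card = 2 := by
      have h1 : 1 ≤ S.card := Finset.card_pos.mpr hSne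
      omega
    -- pure states from eigenvectors
    have hpure : ∀ m, ρ m ∈ PureStates d := by
      intro m
      refine ⟨⟨vmv_psd (v m), hρtr m⟩, ?_⟩
      refine le_antisymm (vmv_rank_le _ _) ?_
      refine rank_pos_of_ne_zero _ ?_
      intro h0
      have := hρtr m
      rw [h0] at this
      simp at this
    rcases hcard12 with h1 | h2
    · -- rank 1: contradiction with trace zero
      obtain ⟨a, ha⟩ := Finset.card_eq_one.mp h1
      have haS : a ∈ S := by rw [ha]; exact Finset.mem_singleton_self a
      have hμa : μ a ≠ 0 := (hmemS a).mp haS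
      have := hrestrict (fun m => (μ m : ℂ)) (fun m h0 => by simp [h0])
      rw [htrace, ha, Finset.sum_singleton] at this
      exact hμa (by exact_mod_cast this.symm)
    · -- rank 2
      obtain ⟨a, b, hab, hSab⟩ := Finset.card_eq_two.mp h2
      have haS : a ∈ S := by rw [hSab]; simp
      have hbS : b ∈ S := by rw [hSab]; simp
      have hμa : μ a ≠ 0 := (hmemS a).mp haS
      have hsum2 : (μ a : ℂ) + (μ b : ℂ) = 0 := by
        have := hrestrict (fun m => (μ m : ℂ)) (fun m h0 => by simp [h0])
        rw [htrace, hSab, Finset.sum_insert (by simpa using hab), Finset.sum_singleton] at this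
        exact this.symm
      have hμb : (μ b : ℂ) = -(μ a : ℂ) := by linear_combination hsum2
      have hcj : ∀ j, (ρ a * A j).trace = (ρ b * A j).trace := by
        intro j
        have h := hrestrict (fun m => (μ m : ℂ) * (ρ m * A j).trace)
          (fun m h0 => by simp [h0])
        rw [← hK (A j), hTr j, hSab, Finset.sum_insert (by simpa using hab),
          Finset.sum_singleton] at h
        have h' : (μ a : ℂ) * ((ρ a * A j).trace - (ρ b * A j).trace) = 0 := by
          rw [hμb] at h
          linear_combination -h
        have hμa' : (μ a : ℂ) ≠ 0 := by exact_mod_cast hμa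
        have := mul_eq_zero.mp h'
        rcases this with h'' | h''
        · exact absurd h'' hμa'
        · exact sub_eq_zero.mp h''
      have heq : ρ a = ρ b := hIC (ρ a) (hpure a) (ρ b) (hpure b) hcj
      -- contradiction: orthogonal rank-one projections are distinct
      have h0 : (ρ a * ρ b).trace = 0 := by
        rw [hρ, trace_vmv_mul, myVecMulVec_mulVec, dotProduct_smul, smul_eq_mul]
        have h1 : star (v b) ⬝ᵥ v a = 0 := by
          rw [horth b a]; simp [Ne.symm hab]
        rw [h1, zero_mul]
      have h1' : (ρ b * ρ b).trace = 1 := by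
        rw [hρ, trace_vmv_mul, myVecMulVec_mulVec, dotProduct_smul, smul_eq_mul]
        have h1 : star (v b) ⬝ᵥ v b = 1 := by rw [horth b b]; simp
        rw [h1, one_mul]
      rw [heq, h1'] at h0
      exact one_ne_zero h0
  · -- rank ≥ 3 → IC
    intro hrk ρ₁ hρ₁ ρ₂ hρ₂ htr
    by_contra hne
    have hherm : (ρ₁ - ρ₂).IsHermitian := hρ₁.1.1.1.sub hρ₂.1.1.1
    have hne0 : ρ₁ - ρ₂ ≠ 0 := sub_ne_zero.mpr hne
    have htr0 : ∀ j, ((ρ₁ - ρ₂) * A j).trace = 0 := by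
      intro j
      rw [sub_mul, trace_sub, htr j, sub_self]
    have h3 := hrk (ρ₁ - ρ₂) hherm hne0 htr0
    have hle : (ρ₁ - ρ₂).rank ≤ 2 := by
      have := matrix_rank_sub_le ρ₁ ρ₂
      rw [hρ₁.2, hρ₂.2] at this
      omega
    omega
end

section
/- Let A be a POVM with n outcomes on ℂ². Then A is informationally complete with respect to the set of pure states on ℂ² if and only if A is informationally complete with respect to the set of all states on ℂ². -/
open Matrix
open scoped ComplexOrder

section Aux

noncomputable def projMat {d : ℕ} (U : Matrix (Fin d) (Fin d) ℂ) (i : Fin d) :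
    Matrix (Fin d) (Fin d) ℂ :=
  U * Matrix.diagonal (fun k => if k = i then (1:ℂ) else 0) * star U

lemma projMat_pure {d : ℕ} (U : Matrix.unitaryGroup (Fin d) ℂ) (i : Fin d) :
    projMat (U : Matrix (Fin d) (Fin d) ℂ) i ∈ PureStates d := by
  have hU1 : (U : Matrix (Fin d) (Fin d) ℂ) * star (U : Matrix (Fin d) (Fin d) ℂ) = 1 :=
    Matrix.mem_unitaryGroup_iff.mp U.2
  have hU2 : star (U : Matrix (Fin d) (Fin d) ℂ) * (U : Matrix (Fin d) (Fin d) ℂ) = 1 :=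
    Matrix.mem_unitaryGroup_iff'.mp U.2
  have hDpsd : (Matrix.diagonal (fun k => if k = i then (1:ℂ) else 0)).PosSemidef := by
    refine Matrix.posSemidef_diagonal_iff.mpr fun k => ?_
    by_cases h : k = i <;> simp [h]
  refine ⟨⟨?_, ?_⟩, ?_⟩
  · simpa [projMat, Matrix.star_eq_conjTranspose] using
      hDpsd.mul_mul_conjTranspose_same (U : Matrix (Fin d) (Fin d) ℂ)
  · rw [projMat, Matrix.trace_mul_cycle, hU2, one_mul]
    simp [Matrix.trace_diagonal]
  · have hUdet : IsUnit (U : Matrix (Fin d) (Fin d) ℂ).det :=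
      (Matrix.isUnit_iff_isUnit_det _).mp (Unitary.toUnits U).isUnit
    have hUsdet : IsUnit (star (U : Matrix (Fin d) (Fin d) ℂ)).det :=
      (Matrix.isUnit_iff_isUnit_det _).mp ((Unitary.toUnits U).isUnit.star)
    rw [projMat, Matrix.rank_mul_eq_left_of_isUnit_det _ _ hUsdet,
      Matrix.rank_mul_eq_right_of_isUnit_det _ _ hUdet, Matrix.rank_diagonal]
    rw [Fintype.card_congr (Equiv.subtypeEquivRight (q := fun k => k = i) (fun k => by
      by_cases h : k = i <;> simp [h]))]
    exact Fintype.card_subtype_eq i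

lemma projMat_inj {d : ℕ} (U : Matrix.unitaryGroup (Fin d) ℂ) {i j : Fin d}
    (h : projMat (U : Matrix (Fin d) (Fin d) ℂ) i = projMat (U : Matrix (Fin d) (Fin d) ℂ) j) :
    i = j := by
  have hU1 : (U : Matrix (Fin d) (Fin d) ℂ) * star (U : Matrix (Fin d) (Fin d) ℂ) = 1 :=
    Matrix.mem_unitaryGroup_iff.mp U.2
  have hU2 : star (U : Matrix (Fin d) (Fin d) ℂ) * (U : Matrix (Fin d) (Fin d) ℂ) = 1 :=
    Matrix.mem_unitaryGroup_iff'.mp U.2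
  have hD : Matrix.diagonal (fun k => if k = i then (1:ℂ) else 0)
      = Matrix.diagonal (fun k => if k = j then (1:ℂ) else 0) := by
    have cancel : ∀ D : Matrix (Fin d) (Fin d) ℂ,
        star (U : Matrix (Fin d) (Fin d) ℂ) * ((U : Matrix (Fin d) (Fin d) ℂ) * D
          * star (U : Matrix (Fin d) (Fin d) ℂ)) * (U : Matrix (Fin d) (Fin d) ℂ) = D := by
      intro D
      rw [← mul_assoc, ← mul_assoc, hU2, one_mul, mul_assoc, hU2, mul_one]
    have h2 := congrArg (fun M => star (U : Matrix (Fin d) (Fin d) ℂ) * M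
      * (U : Matrix (Fin d) (Fin d) ℂ)) h
    simp only [projMat] at h2
    rwa [cancel, cancel] at h2
  by_contra hij
  have := congrFun (congrFun hD i) i
  simp [Matrix.diagonal_apply, hij] at this

theorem exists_pure_decomp (σ : Matrix (Fin 2) (Fin 2) ℂ) (hσ : σ.IsHermitian)
    (ht : σ.trace = 0) (hne : σ ≠ 0) :
    ∃ (c : ℝ) (P Q : Matrix (Fin 2) (Fin 2) ℂ), 0 < c ∧ P ∈ PureStates 2 ∧ Q ∈ PureStates 2 ∧
      P ≠ Q ∧ σ = (c : ℂ) • (P - Q) := by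
  set U := hσ.eigenvectorUnitary with hUdef
  set e := hσ.eigenvalues with hedef
  have hspec := hσ.spectral_theorem
  have hDsum : Matrix.diagonal (RCLike.ofReal ∘ e : Fin 2 → ℂ)
      = ((e 0 : ℂ)) • Matrix.diagonal (fun k => if k = (0 : Fin 2) then (1:ℂ) else 0)
        + ((e 1 : ℂ)) • Matrix.diagonal (fun k => if k = (1 : Fin 2) then (1:ℂ) else 0) := by
    ext a b
    fin_cases a <;> fin_cases b <;>
      simp [Matrix.diagonal_apply, Matrix.add_apply, Matrix.smul_apply]
  have hσeq : σ = (e 0 : ℂ) • projMat (U : Matrix (Fin 2) (Fin 2) ℂ) 0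
      + (e 1 : ℂ) • projMat (U : Matrix (Fin 2) (Fin 2) ℂ) 1 := by
    rw [projMat, projMat]
    conv_lhs => rw [hspec]
    rw [Unitary.conjStarAlgAut_apply, hDsum, Matrix.mul_add, Matrix.add_mul, Matrix.mul_smul, Matrix.smul_mul,
      Matrix.mul_smul, Matrix.smul_mul]
  have htr : (e 0 : ℂ) + (e 1 : ℂ) = 0 := by
    have h0 := (projMat_pure U 0).1.2
    have h1 := (projMat_pure U 1).1.2
    calc (e 0 : ℂ) + (e 1 : ℂ)
        = ((e 0 : ℂ) • projMat (U : Matrix (Fin 2) (Fin 2) ℂ) 0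
          + (e 1 : ℂ) • projMat (U : Matrix (Fin 2) (Fin 2) ℂ) 1).trace := by
          rw [Matrix.trace_add, Matrix.trace_smul, Matrix.trace_smul, h0, h1]
          simp
      _ = σ.trace := by rw [← hσeq]
      _ = 0 := ht
  have htrR : e 0 + e 1 = 0 := by exact_mod_cast htr
  have he0 : e 0 ≠ 0 := by
    intro h0
    have h1 : e 1 = 0 := by linarith
    apply hne
    rw [hσeq, h0, h1]
    simp
  have hPQ : projMat (U : Matrix (Fin 2) (Fin 2) ℂ) 0 ≠ projMat (U : Matrix (Fin 2) (Fin 2) ℂ) 1 :=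
    fun h => absurd (projMat_inj U h) (by decide)
  have he1 : (e 1 : ℂ) = -(e 0 : ℂ) := by
    rw [eq_neg_iff_add_eq_zero, add_comm]; exact htr
  rcases lt_or_gt_of_ne he0 with hlt | hgt
  · refine ⟨-(e 0), projMat (U : Matrix (Fin 2) (Fin 2) ℂ) 1,
      projMat (U : Matrix (Fin 2) (Fin 2) ℂ) 0, by linarith,
      projMat_pure U 1, projMat_pure U 0, fun h => hPQ h.symm, ?_⟩
    rw [hσeq, he1]
    push_cast
    rw [smul_sub]
    ring_nf
    module
  · refine ⟨e 0, projMat (U : Matrix (Fin 2) (Fin 2) ℂ) 0,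
      projMat (U : Matrix (Fin 2) (Fin 2) ℂ) 1, hgt,
      projMat_pure U 0, projMat_pure U 1, hPQ, ?_⟩
    rw [hσeq, he1, smul_sub]
    module

end Aux

/-- The qubit case: a POVM on `ℂ²` is informationally complete w.r.t. the pure states iff it is
informationally complete w.r.t. all states. -/
theorem qubit_pure_ic_iff_ic (n : ℕ) (A : Fin n → Matrix (Fin 2) (Fin 2) ℂ)
    (hA : IsPOVM A) :
    IsIC A (PureStates 2) ↔ IsIC A {ρ : Matrix (Fin 2) (Fin 2) ℂ | IsState ρ} := by
  constructor
  · intro h ρ₁ h₁ ρ₂ h₂ heq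
    by_contra hne
    obtain ⟨c, P, Q, hc, hP, hQ, hPQ, hdec⟩ := exists_pure_decomp (ρ₁ - ρ₂)
      (h₁.1.1.sub h₂.1.1)
      (by rw [Matrix.trace_sub, h₁.2, h₂.2, sub_self])
      (sub_ne_zero.mpr hne)
    have key : ∀ j, (P * A j).trace = (Q * A j).trace := by
      intro j
      have h0 : ((ρ₁ - ρ₂) * A j).trace = 0 := by
        rw [Matrix.sub_mul, Matrix.trace_sub, heq j, sub_self]
      rw [hdec] at h0
      rw [smul_mul_assoc, Matrix.trace_smul, Matrix.sub_mul, Matrix.trace_sub,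
        smul_eq_mul, mul_eq_zero] at h0
      rcases h0 with h0 | h0
      · exact absurd h0 (by exact_mod_cast hc.ne')
      · exact sub_eq_zero.mp h0

    exact hPQ (h P hP Q hQ key)
  · intro h ρ₁ h₁ ρ₂ h₂ heq
    exact h ρ₁ h₁.1 ρ₂ h₂.1 heq
end

section
/- Let A be a POVM with n outcomes on ℂ³, and let A^⊥ = {B ∈ Matrix (Fin 3) (Fin 3) ℂ : trace(Bᴴ * A j) = 0 for all j} be the orthogonal complement of the span of the POVM elements with respect to the Hilbert–Schmidt inner product. Then A is informationally complete with respect to the set of pure states on ℂ³ if and only if either A^⊥ = {0}, or there exists an invertible selfadjoint matrix T with trace T = 0 such that A^⊥ = {c • T : c ∈ ℂ}. -/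
open Matrix
open scoped ComplexOrder

private lemma aux_rank_sub_le (A B : Matrix (Fin 3) (Fin 3) ℂ) :
    (A - B).rank ≤ A.rank + B.rank := by
  have h : LinearMap.range (A - B).mulVecLin ≤
      LinearMap.range A.mulVecLin ⊔ LinearMap.range B.mulVecLin := by
    rintro y ⟨v, rfl⟩
    have hv : (A - B).mulVecLin v = A.mulVecLin v - B.mulVecLin v := by
      simp [Matrix.mulVecLin_apply, Matrix.sub_mulVec]
    rw [hv]
    exact Submodule.sub_mem _ (Submodule.mem_sup_left ⟨v, rfl⟩)
      (Submodule.mem_sup_right ⟨v, rfl⟩)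
  exact le_trans (Submodule.finrank_mono h)
    (Submodule.finrank_add_le_finrank_add_finrank _ _)

private lemma aux_rank_zero {P : Matrix (Fin 3) (Fin 3) ℂ} (h : P.rank = 0) : P = 0 := by
  rw [Matrix.rank, Submodule.finrank_eq_zero] at h
  have h' : P.mulVecLin = 0 := LinearMap.range_eq_bot.mp h
  ext i j
  have := congrFun (congrArg (fun f => f (Pi.single j 1)) (congrArg DFunLike.coe h')) i
  simpa [Matrix.mulVecLin_apply, Matrix.mulVec_single] using this

private lemma aux_fin3 (μ : Fin 3 → ℝ) (hsum : μ 0 + μ 1 + μ 2 = 0)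
    (hprod : μ 0 * μ 1 * μ 2 = 0) (hne : ¬ (μ 0 = 0 ∧ μ 1 = 0 ∧ μ 2 = 0)) :
    ∃ (t : ℝ) (i j : Fin 3), t ≠ 0 ∧ i ≠ j ∧
      ∀ k, μ k = t * ((if k = i then 1 else 0) - (if k = j then 1 else 0)) := by
  rcases mul_eq_zero.mp hprod with h01 | h2
  · rcases mul_eq_zero.mp h01 with h0 | h1
    · have h12 : μ 2 = -μ 1 := by linarith
      have h1ne : μ 1 ≠ 0 := fun h => hne ⟨h0, h, by rw [h12, h, neg_zero]⟩
      exact ⟨μ 1, 1, 2, h1ne, by decide, fun k => by fin_cases k <;> simp [h0, h12]⟩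
    · have h02 : μ 2 = -μ 0 := by linarith
      have h0ne : μ 0 ≠ 0 := fun h => hne ⟨h, h1, by rw [h02, h, neg_zero]⟩
      exact ⟨μ 0, 0, 2, h0ne, by decide, fun k => by fin_cases k <;> simp [h1, h02]⟩
  · have h01' : μ 1 = -μ 0 := by linarith
    have h0ne : μ 0 ≠ 0 := fun h => hne ⟨h, by rw [h01', h, neg_zero], h2⟩
    exact ⟨μ 0, 0, 1, h0ne, by decide, fun k => by fin_cases k <;> simp [h2, h01']⟩

private lemma aux_key {B : Matrix (Fin 3) (Fin 3) ℂ} (hB : B.IsHermitian)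
    (hBtr : B.trace = 0) (hBne : B ≠ 0) (hBdet : B.det = 0) :
    ∃ ρ₁ ρ₂, ρ₁ ∈ PureStates 3 ∧ ρ₂ ∈ PureStates 3 ∧
      ∃ t : ℂ, t ≠ 0 ∧ ρ₁ - ρ₂ = t • B := by
  set U : Matrix (Fin 3) (Fin 3) ℂ := (hB.eigenvectorUnitary : Matrix (Fin 3) (Fin 3) ℂ) with hU
  set μ : Fin 3 → ℝ := hB.eigenvalues with hμdef
  have hUU : star U * U = 1 := Matrix.mem_unitaryGroup_iff'.mp (hB.eigenvectorUnitary).2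
  have hspec : B = U * Matrix.diagonal (fun k => (μ k : ℂ)) * star U := by
    exact hB.spectral_theorem
  have htr : ∀ d : Fin 3 → ℂ, (U * Matrix.diagonal d * star U).trace = ∑ k, d k := by
    intro d
    rw [Matrix.trace_mul_cycle, hUU, one_mul, Matrix.trace_diagonal]
  have hμsum : μ 0 + μ 1 + μ 2 = 0 := by
    have : ((μ 0 + μ 1 + μ 2 : ℝ) : ℂ) = 0 := by
      rw [hspec] at hBtr
      rw [htr] at hBtr
      rw [Fin.sum_univ_three] at hBtr
      push_cast
      exact hBtr
    exact_mod_cast this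
  have hμprod : μ 0 * μ 1 * μ 2 = 0 := by
    have h1 : ((μ 0 * μ 1 * μ 2 : ℝ) : ℂ) = 0 := by
      have h2 := hB.det_eq_prod_eigenvalues
      rw [hBdet, Fin.prod_univ_three] at h2
      push_cast
      exact h2.symm
    exact_mod_cast h1
  have hμne : ¬ (μ 0 = 0 ∧ μ 1 = 0 ∧ μ 2 = 0) := by
    rintro ⟨h0, h1, h2⟩
    apply hBne
    rw [hspec]
    have : (Matrix.diagonal (fun k => (μ k : ℂ))) = 0 := by
      have : (fun k => (μ k : ℂ)) = (0 : Fin 3 → ℂ) := by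
        funext k; fin_cases k <;> simp [h0, h1, h2]
      rw [this]; exact Matrix.diagonal_zero
    rw [this, Matrix.mul_zero, Matrix.zero_mul]
  obtain ⟨t, i, j, ht, hij, hμ⟩ := aux_fin3 μ hμsum hμprod hμne
  set P : Fin 3 → Matrix (Fin 3) (Fin 3) ℂ :=
    fun i => U * Matrix.diagonal (fun k => if k = i then 1 else 0) * star U with hP
  have hPure : ∀ i, P i ∈ PureStates 3 := by
    intro i
    have hd : (Matrix.diagonal (fun k => if k = i then (1:ℂ) else 0)).PosSemidef := by
      refine Matrix.PosSemidef.diagonal fun k => ?_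
      dsimp only
      split <;> simp
    have hpsd : (P i).PosSemidef := by
      have := hd.mul_mul_conjTranspose_same U
      rwa [← Matrix.star_eq_conjTranspose] at this
    have htr1 : (P i).trace = 1 := by
      rw [hP]; dsimp only
      rw [htr]
      simp
    refine ⟨⟨hpsd, htr1⟩, ?_⟩
    have hvv : P i = Matrix.vecMulVec (fun a => U a i) (star fun a => U a i) := by
      ext a b
      simp [hP, Matrix.mul_apply, Matrix.mul_diagonal, Matrix.star_apply,
        Matrix.vecMulVec_apply, Matrix.diagonal_apply, ite_mul, mul_ite, zero_mul,
        mul_zero, Finset.sum_ite_eq, Finset.sum_ite_eq']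
    have hle : (P i).rank ≤ 1 := by
      rw [hvv, Matrix.vecMulVec_eq (Fin 1)]
      exact le_trans (Matrix.rank_mul_le_left _ _)
        (le_trans (Matrix.rank_le_card_width _) (by simp))
    have hne0 : (P i).rank ≠ 0 := by
      intro h
      have := aux_rank_zero h
      rw [this, Matrix.trace_zero] at htr1
      exact one_ne_zero htr1.symm
    omega
  have hμC : ∀ k, ((μ k : ℂ)) = (t:ℂ) * ((if k = i then 1 else 0) - (if k = j then 1 else 0)) := by
    intro k
    rw [hμ k]
    push_cast [apply_ite (fun x : ℝ => (x : ℂ))]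
    try simp
  have htC : (t : ℂ) ≠ 0 := by exact_mod_cast ht
  have hdiff : P i - P j = (t:ℂ)⁻¹ • B := by
    rw [hspec, hP]
    dsimp only
    rw [← Matrix.sub_mul, ← Matrix.mul_sub, Matrix.diagonal_sub]
    rw [← Matrix.smul_mul, ← Matrix.mul_smul, ← Matrix.diagonal_smul]
    have heq : (fun k => (if k = i then (1:ℂ) else 0) - (if k = j then 1 else 0)) =
        (t:ℂ)⁻¹ • (fun k => (μ k : ℂ)) := by
      funext k
      simp only [Pi.smul_apply, smul_eq_mul]
      rw [hμC k, ← mul_assoc, inv_mul_cancel₀ htC, one_mul]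
    rw [heq]
  exact ⟨P i, P j, hPure i, hPure j, (t : ℂ)⁻¹, inv_ne_zero htC, hdiff⟩

/-- Prop. 8 of the paper: a POVM on `ℂ³` is informationally complete w.r.t. the pure states iff
the Hilbert–Schmidt orthogonal complement of the span of its elements is either `{0}` or the
complex line spanned by an invertible traceless selfadjoint matrix. -/
theorem pure_state_ic_dim3_characterization (n : ℕ) (A : Fin n → Matrix (Fin 3) (Fin 3) ℂ)
    (hA : IsPOVM A) :
    IsIC A (PureStates 3) ↔
      ({B : Matrix (Fin 3) (Fin 3) ℂ | ∀ j, (Bᴴ * A j).trace = 0} = {0} ∨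
       ∃ T : Matrix (Fin 3) (Fin 3) ℂ, T.IsHermitian ∧ IsUnit T ∧ T.trace = 0 ∧
         {B : Matrix (Fin 3) (Fin 3) ℂ | ∀ j, (Bᴴ * A j).trace = 0} =
           {B : Matrix (Fin 3) (Fin 3) ℂ | ∃ c : ℂ, B = c • T}) := by
  obtain ⟨hpos, hsum⟩ := hA
  set V : Set (Matrix (Fin 3) (Fin 3) ℂ) := {B | ∀ j, (Bᴴ * A j).trace = 0} with hVdef
  have hVsmul : ∀ (c : ℂ) (B), B ∈ V → c • B ∈ V := by
    intro c B hB j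
    rw [Matrix.conjTranspose_smul, Matrix.smul_mul, Matrix.trace_smul, hB j, smul_zero]
  have hVadd : ∀ B C, B ∈ V → C ∈ V → B + C ∈ V := by
    intro B C hB hC j
    rw [Matrix.conjTranspose_add, Matrix.add_mul, Matrix.trace_add, hB j, hC j, add_zero]
  have hVtraceB : ∀ B ∈ V, ∀ j, (B * A j).trace = 0 := by
    intro B hB j
    have h1 := congrArg star (hB j)
    rw [star_zero, ← Matrix.trace_conjTranspose, Matrix.conjTranspose_mul,
      Matrix.conjTranspose_conjTranspose, (hpos j).1.eq, Matrix.trace_mul_comm] at h1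
    exact h1
  have hVstar : ∀ B ∈ V, Bᴴ ∈ V := by
    intro B hB j
    rw [Matrix.conjTranspose_conjTranspose]
    exact hVtraceB B hB j
  have hVtr : ∀ B ∈ V, B.trace = 0 := by
    intro B hB
    have h1 : Bᴴ.trace = 0 := by
      calc Bᴴ.trace = (Bᴴ * 1).trace := by rw [Matrix.mul_one]
        _ = (Bᴴ * ∑ j, A j).trace := by rw [hsum]
        _ = ∑ j, (Bᴴ * A j).trace := by rw [Matrix.mul_sum, Matrix.trace_sum]
        _ = 0 := by simp only [hB _]; simp
    rw [Matrix.trace_conjTranspose] at h1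
    exact star_eq_zero.mp h1
  constructor
  · intro hIC
    have hbad : ∀ B ∈ V, B.IsHermitian → B ≠ 0 → IsUnit B := by
      intro B hBV hBh hBne
      rw [Matrix.isUnit_iff_isUnit_det, isUnit_iff_ne_zero]
      intro hdet
      obtain ⟨ρ₁, ρ₂, h₁, h₂, t, ht, hdiff⟩ := aux_key hBh (hVtr B hBV) hBne hdet
      have hmemD : ρ₁ - ρ₂ ∈ V := hdiff ▸ hVsmul t B hBV
      have hd : ∀ j, (ρ₁ * A j).trace = (ρ₂ * A j).trace := by
        intro j
        have h2 := hVtraceB _ hmemD j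
        rw [Matrix.sub_mul, Matrix.trace_sub, sub_eq_zero] at h2
        exact h2
      have h3 := hIC ρ₁ h₁ ρ₂ h₂ hd
      rw [h3, sub_self] at hdiff
      exact smul_ne_zero ht hBne hdiff.symm
    by_cases hV : V = {0}
    · exact Or.inl hV
    right
    have hne' : ∃ B ∈ V, B ≠ 0 := by
      by_contra hcon
      push_neg at hcon
      apply hV
      apply Set.eq_singleton_iff_unique_mem.mpr
      refine ⟨fun j => by simp, fun x hx => hcon x hx⟩
    obtain ⟨B₀, hB₀V, hB₀ne⟩ := hne'
    have hTex : ∃ T ∈ V, T.IsHermitian ∧ T ≠ 0 := by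
      by_cases hX : B₀ + B₀ᴴ = 0
      · have h2 : B₀ᴴ = -B₀ := eq_neg_of_add_eq_zero_left (by rwa [add_comm] at hX)
        refine ⟨Complex.I • B₀, hVsmul _ _ hB₀V, ?_,
          smul_ne_zero Complex.I_ne_zero hB₀ne⟩
        show (Complex.I • B₀)ᴴ = Complex.I • B₀
        rw [Matrix.conjTranspose_smul, h2, Complex.star_def, Complex.conj_I, neg_smul,
          smul_neg, neg_neg]
      · refine ⟨(2⁻¹ : ℂ) • (B₀ + B₀ᴴ), hVsmul _ _ (hVadd _ _ hB₀V (hVstar B₀ hB₀V)), ?_,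
          smul_ne_zero (by norm_num) hX⟩
        show ((2⁻¹ : ℂ) • (B₀ + B₀ᴴ))ᴴ = (2⁻¹ : ℂ) • (B₀ + B₀ᴴ)
        rw [Matrix.conjTranspose_smul, Matrix.conjTranspose_add,
          Matrix.conjTranspose_conjTranspose, add_comm B₀ᴴ B₀]
        congr 1
        simp
    obtain ⟨T, hTV, hTh, hTne⟩ := hTex
    have hTu : IsUnit T := hbad T hTV hTh hTne
    have hdetreal : ∀ M : Matrix (Fin 3) (Fin 3) ℂ, M.IsHermitian →
        ((M.det.re : ℂ)) = M.det := by
      intro M hM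
      have h2 := Matrix.det_conjTranspose M
      rw [hM.eq] at h2
      exact Complex.conj_eq_iff_re.mp h2.symm
    have hrmul : ∀ X, X ∈ V → X.IsHermitian → ∃ r : ℝ, X = (r : ℂ) • T := by
      intro X hXV hXh
      by_contra hcon
      push_neg at hcon
      set g : ℝ → Matrix (Fin 3) (Fin 3) ℂ :=
        fun θ => ((Real.cos θ : ℂ)) • X + ((Real.sin θ : ℂ)) • T with hg
      have hgherm : ∀ θ, (g θ).IsHermitian := by
        intro θ
        show (g θ)ᴴ = g θ
        rw [hg]
        simp only [Matrix.conjTranspose_add, Matrix.conjTranspose_smul, hXh.eq, hTh.eq,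
          Complex.star_def, Complex.conj_ofReal]
      have hgV : ∀ θ, g θ ∈ V := fun θ => hVadd _ _ (hVsmul _ _ hXV) (hVsmul _ _ hTV)
      have hgne : ∀ θ, g θ ≠ 0 := by
        intro θ h0
        rw [hg] at h0
        dsimp only at h0
        rcases eq_or_ne (Real.cos θ) 0 with hc | hc
        · have hs : Real.sin θ ≠ 0 := by
            intro hs
            have h2 := Real.sin_sq_add_cos_sq θ
            rw [hs, hc] at h2; norm_num at h2
          rw [hc] at h0
          simp only [Complex.ofReal_zero, zero_smul, zero_add] at h0
          rcases smul_eq_zero.mp h0 with h | h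
          · exact hs (by exact_mod_cast h)
          · exact hTne h
        · have hcC : ((Real.cos θ : ℂ)) ≠ 0 := by exact_mod_cast hc
          have h1 : ((Real.cos θ : ℂ))⁻¹ • (((Real.cos θ : ℂ)) • X +
              ((Real.sin θ : ℂ)) • T) = 0 := by rw [h0, smul_zero]
          rw [smul_add, smul_smul, smul_smul, inv_mul_cancel₀ hcC, one_smul] at h1
          have h2 : X = ((-(Real.sin θ / Real.cos θ) : ℝ) : ℂ) • T := by
            rw [eq_neg_of_add_eq_zero_left h1, ← neg_smul]
            congr 1
            push_cast
            field_simp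
          exact hcon _ h2
      have hcont : Continuous fun θ => ((g θ).det).re := by
        apply Complex.continuous_re.comp
        apply Continuous.matrix_det
        exact ((Complex.continuous_ofReal.comp Real.continuous_cos).smul
          continuous_const).add
          ((Complex.continuous_ofReal.comp Real.continuous_sin).smul continuous_const)
      have hXne : X ≠ 0 := fun h => hcon 0 (by rw [h]; simp)
      have hXu : IsUnit X := hbad X hXV hXh hXne
      have hdX : X.det ≠ 0 := by
        rw [Matrix.isUnit_iff_isUnit_det, isUnit_iff_ne_zero] at hXu; exact hXu
      have hg0 : g 0 = X := by rw [hg]; simp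
      have hgpi : g Real.pi = -X := by
        rw [hg]; simp [Real.cos_pi, Real.sin_pi]
      have hf0 : ((g 0).det).re ≠ 0 := by
        rw [hg0]
        intro h
        apply hdX
        rw [← hdetreal X hXh, h, Complex.ofReal_zero]
      have hfpi : ((g Real.pi).det).re = -(((g 0).det).re) := by
        rw [hg0, hgpi]
        have h2 : (-X).det = -X.det := by
          rw [Matrix.det_neg]
          norm_num
        rw [h2, Complex.neg_re]
      obtain ⟨θ, hθmem, hθ⟩ : ∃ θ ∈ Set.Icc 0 Real.pi, ((g θ).det).re = 0 := by
        rcases lt_or_gt_of_ne hf0 with h | h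
        · have h0mem : (0:ℝ) ∈ Set.Icc (((g 0).det).re) (((g Real.pi).det).re) :=
            ⟨le_of_lt h, by rw [hfpi]; linarith⟩
          obtain ⟨θ, hθ1, hθ2⟩ := intermediate_value_Icc Real.pi_pos.le
            hcont.continuousOn h0mem
          exact ⟨θ, hθ1, hθ2⟩
        · have h0mem : (0:ℝ) ∈ Set.Icc (((g Real.pi).det).re) (((g 0).det).re) :=
            ⟨by rw [hfpi]; linarith, le_of_lt h⟩
          obtain ⟨θ, hθ1, hθ2⟩ := intermediate_value_Icc' Real.pi_pos.le
            hcont.continuousOn h0mem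
          exact ⟨θ, hθ1, hθ2⟩
      have hMu : IsUnit (g θ) := hbad _ (hgV θ) (hgherm θ) (hgne θ)
      rw [Matrix.isUnit_iff_isUnit_det, isUnit_iff_ne_zero] at hMu
      apply hMu
      rw [← hdetreal _ (hgherm θ), hθ, Complex.ofReal_zero]
    refine ⟨T, hTh, hTu, hVtr T hTV, ?_⟩
    ext B
    simp only [Set.mem_setOf_eq]
    constructor
    · intro hBV
      have hBV' : (B : Matrix (Fin 3) (Fin 3) ℂ) ∈ V := hBV
      have herm1 : ((2⁻¹ : ℂ) • (B + Bᴴ)).IsHermitian := by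
        show ((2⁻¹ : ℂ) • (B + Bᴴ))ᴴ = (2⁻¹ : ℂ) • (B + Bᴴ)
        rw [Matrix.conjTranspose_smul, Matrix.conjTranspose_add,
          Matrix.conjTranspose_conjTranspose, add_comm Bᴴ B]
        congr 1
        simp
      have herm2 : ((-(Complex.I) * 2⁻¹) • (B - Bᴴ)).IsHermitian := by
        show ((-(Complex.I) * 2⁻¹) • (B - Bᴴ))ᴴ = (-(Complex.I) * 2⁻¹) • (B - Bᴴ)
        rw [Matrix.conjTranspose_smul, Matrix.conjTranspose_sub,
          Matrix.conjTranspose_conjTranspose,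
          show Bᴴ - B = -(B - Bᴴ) from (neg_sub _ _).symm, smul_neg, ← neg_smul]
        congr 1
        simp [Complex.star_def]
      obtain ⟨r, hr⟩ := hrmul _ (hVsmul _ _ (hVadd _ _ hBV' (hVstar B hBV'))) herm1
      have hsub : B - Bᴴ ∈ V := by
        have := hVadd _ _ hBV' (hVsmul (-1) _ (hVstar B hBV'))
        simpa [sub_eq_add_neg] using this
      obtain ⟨s, hs⟩ := hrmul _ (hVsmul (-(Complex.I) * 2⁻¹) _ hsub) herm2
      refine ⟨(r : ℂ) + Complex.I * s, ?_⟩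
      have h1 : (2⁻¹ : ℂ) • (B + Bᴴ) + Complex.I • ((-(Complex.I) * 2⁻¹) • (B - Bᴴ)) = B := by
        have hii : Complex.I * (-(Complex.I) * 2⁻¹) = (2⁻¹ : ℂ) := by
          rw [← mul_assoc, mul_neg, Complex.I_mul_I]; ring
        rw [smul_smul, hii, smul_add, smul_sub]
        module
      rw [← h1, hr, hs, smul_smul, ← add_smul]
    · rintro ⟨c, rfl⟩
      exact hVsmul c T hTV
  · rintro hOr ρ₁ h₁ ρ₂ h₂ htr
    obtain ⟨⟨hpsd1, htr1⟩, hrk1⟩ := h₁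
    obtain ⟨⟨hpsd2, htr2⟩, hrk2⟩ := h₂
    have hherm : (ρ₁ - ρ₂)ᴴ = ρ₁ - ρ₂ := by
      rw [Matrix.conjTranspose_sub, hpsd1.1.eq, hpsd2.1.eq]
    have hD : ρ₁ - ρ₂ ∈ V := by
      intro j
      rw [hherm, Matrix.sub_mul, Matrix.trace_sub, htr j, sub_self]
    rcases hOr with h | ⟨T, hTh, hTu, hTtr, hEq⟩
    · rw [h] at hD
      exact sub_eq_zero.mp hD
    · rw [hEq] at hD
      obtain ⟨c, hc⟩ := hD
      rcases eq_or_ne c 0 with rfl | hc0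
      · rw [zero_smul] at hc
        exact sub_eq_zero.mp hc
      · exfalso
        have hdetT : T.det ≠ 0 := by
          rw [Matrix.isUnit_iff_isUnit_det, isUnit_iff_ne_zero] at hTu; exact hTu
        have hunit : IsUnit (ρ₁ - ρ₂) := by
          rw [Matrix.isUnit_iff_isUnit_det, hc, Matrix.det_smul, isUnit_iff_ne_zero]
          exact mul_ne_zero (pow_ne_zero _ hc0) hdetT
        have h3 := Matrix.rank_of_isUnit _ hunit
        have hle := aux_rank_sub_le ρ₁ ρ₂
        rw [hrk1, hrk2, h3, Fintype.card_fin] at hle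
        norm_num at hle
end

section
/- Every POVM on ℂ³ that is informationally complete with respect to the set of pure states on ℂ³ has at least 8 outcomes, and there exists a POVM on ℂ³ with exactly 8 outcomes that is informationally complete with respect to the set of pure states on ℂ³. -/
open Matrix
open scoped ComplexOrder

/-! ### Auxiliary rank lemmas -/

lemma myrank_add_le {d : ℕ} (A B : Matrix (Fin d) (Fin d) ℂ) :
    (A + B).rank ≤ A.rank + B.rank := by
  unfold Matrix.rank
  rw [Matrix.mulVecLin_add]
  have h : LinearMap.range (A.mulVecLin + B.mulVecLin) ≤
      LinearMap.range A.mulVecLin ⊔ LinearMap.range B.mulVecLin := by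
    rintro x ⟨y, rfl⟩
    exact Submodule.add_mem_sup ⟨y, rfl⟩ ⟨y, rfl⟩
  exact (Submodule.finrank_mono h).trans
    (Submodule.finrank_add_le_finrank_add_finrank _ _)

lemma myrank_neg {d : ℕ} (A : Matrix (Fin d) (Fin d) ℂ) : (-A).rank = A.rank := by
  have h1 : (-A).mulVecLin = -A.mulVecLin := by
    ext v i
    simp [Matrix.mulVecLin_apply, Matrix.neg_mulVec]
  unfold Matrix.rank
  rw [h1, LinearMap.range_neg]

lemma myrank_zero_iff {d : ℕ} (A : Matrix (Fin d) (Fin d) ℂ) : A.rank = 0 ↔ A = 0 := by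
  constructor
  · intro h
    unfold Matrix.rank at h
    rw [Submodule.finrank_eq_zero, LinearMap.range_eq_bot] at h
    ext i j
    have := congr_fun (congr_fun (congrArg DFunLike.coe h) (Pi.single j 1)) i
    simpa [Matrix.mulVecLin_apply, Matrix.mulVec_single] using this
  · rintro rfl; exact Matrix.rank_zero

/-! ### Outer products -/

def outer {d : ℕ} (v : Fin d → ℂ) : Matrix (Fin d) (Fin d) ℂ :=
  Matrix.of fun i j => v i * star (v j)

lemma outer_eq {d : ℕ} (v : Fin d → ℂ) :
    outer v = (Matrix.replicateRow Unit (star v))ᴴ * Matrix.replicateRow Unit (star v) := by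
  ext i j
  simp [outer, Matrix.mul_apply, Matrix.replicateRow, Matrix.conjTranspose_apply]

lemma outer_posSemidef {d : ℕ} (v : Fin d → ℂ) : (outer v).PosSemidef := by
  rw [outer_eq]; exact Matrix.posSemidef_conjTranspose_mul_self _

lemma outer_rank_le_one {d : ℕ} (v : Fin d → ℂ) : (outer v).rank ≤ 1 := by
  rw [outer_eq]
  calc ((Matrix.replicateRow Unit (star v))ᴴ * Matrix.replicateRow Unit (star v)).rank
      ≤ (Matrix.replicateRow Unit (star v)).rank := Matrix.rank_mul_le_right _ _
    _ ≤ Fintype.card Unit := Matrix.rank_le_card_height _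
    _ = 1 := by simp

lemma outer_ne_zero {d : ℕ} (v : Fin d → ℂ) (hv : v ≠ 0) : outer v ≠ 0 := by
  obtain ⟨i, hi⟩ := Function.ne_iff.mp hv
  simp only [Pi.zero_apply] at hi
  intro h
  have h2 := congr_fun (congr_fun h i) i
  simp only [outer, Matrix.of_apply, Matrix.zero_apply] at h2
  rcases mul_eq_zero.mp h2 with h3 | h3
  · exact hi h3
  · exact hi (star_eq_zero.mp h3)

lemma outer_rank_one {d : ℕ} (v : Fin d → ℂ) (hv : v ≠ 0) : (outer v).rank = 1 := by
  refine le_antisymm (outer_rank_le_one v) ?_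
  have := (myrank_zero_iff (outer v)).not.mpr (outer_ne_zero v hv)
  omega

/-! ### Spectral decomposition helpers -/

lemma spec_entry {D : Matrix (Fin 3) (Fin 3) ℂ} (hD : D.IsHermitian) (x y : Fin 3) :
    D x y = ∑ m, (hD.eigenvalues m : ℂ) *
      ((hD.eigenvectorUnitary : Matrix (Fin 3) (Fin 3) ℂ) x m *
        star ((hD.eigenvectorUnitary : Matrix (Fin 3) (Fin 3) ℂ) y m)) := by
  conv_lhs => rw [hD.spectral_theorem, Unitary.conjStarAlgAut_apply]
  rw [show (star (hD.eigenvectorUnitary : Matrix (Fin 3) (Fin 3) ℂ)) =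
    (hD.eigenvectorUnitary : Matrix (Fin 3) (Fin 3) ℂ)ᴴ from rfl]
  rw [Matrix.mul_apply]
  refine Finset.sum_congr rfl fun m _ => ?_
  rw [Matrix.mul_diagonal, Matrix.conjTranspose_apply]
  simp [mul_comm, mul_assoc, mul_left_comm]

lemma spec_col_unit {D : Matrix (Fin 3) (Fin 3) ℂ} (hD : D.IsHermitian) (m : Fin 3) :
    ∑ x, (hD.eigenvectorUnitary : Matrix (Fin 3) (Fin 3) ℂ) x m *
      star ((hD.eigenvectorUnitary : Matrix (Fin 3) (Fin 3) ℂ) x m) = 1 := by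
  have h := Unitary.coe_star_mul_self hD.eigenvectorUnitary
  have h2 := congr_fun (congr_fun (congrArg (fun M => (M : Matrix (Fin 3) (Fin 3) ℂ)) h) m) m
  simp [Matrix.mul_apply, Matrix.conjTranspose_apply, Matrix.one_apply] at h2
  rw [← h2]
  exact Finset.sum_congr rfl fun x _ => mul_comm _ _

lemma helper2 {D : Matrix (Fin 3) (Fin 3) ℂ} (hD : D.IsHermitian) (hne : D ≠ 0)
    (htr : D.trace = 0) (i j k : Fin 3)
    (hsum : ∀ f : Fin 3 → ℂ, ∑ m, f m = f i + f j + f k)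
    (hk : hD.eigenvalues k = 0) :
    ∃ (ρ₁ ρ₂ : Matrix (Fin 3) (Fin 3) ℂ) (lam : ℝ), ρ₁ ∈ PureStates 3 ∧ ρ₂ ∈ PureStates 3 ∧
      ρ₁ ≠ ρ₂ ∧ lam ≠ 0 ∧ D = (lam : ℂ) • ρ₁ - (lam : ℂ) • ρ₂ := by
  set U : Matrix (Fin 3) (Fin 3) ℂ := (hD.eigenvectorUnitary : Matrix (Fin 3) (Fin 3) ℂ) with hU
  set μ := hD.eigenvalues with hμ
  have htr2 : (μ i : ℂ) + μ j + μ k = 0 := by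
    have : D.trace = ∑ m, (μ m : ℂ) := by
      conv_lhs => rw [hD.spectral_theorem, Unitary.conjStarAlgAut_apply]
      rw [Matrix.trace_mul_cycle]
      rw [show (star (hD.eigenvectorUnitary : Matrix (Fin 3) (Fin 3) ℂ)) *
          (hD.eigenvectorUnitary : Matrix (Fin 3) (Fin 3) ℂ) = 1 from Unitary.coe_star_mul_self _]
      simp [Matrix.trace_diagonal]
      rfl
    rw [htr] at this
    rw [hsum] at this
    linear_combination -this
  have hjk : (μ j : ℂ) = -(μ i : ℂ) := by
    rw [hk] at htr2; push_cast at htr2; linear_combination htr2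
  set u : Fin 3 → Fin 3 → ℂ := fun m x => U x m with hu
  have hDentry : ∀ x y, D x y = (μ i : ℂ) * (u i x * star (u i y)) +
      (μ j : ℂ) * (u j x * star (u j y)) := by
    intro x y
    rw [spec_entry hD x y, hsum]
    simp only [hu, ← hμ, ← hU]
    rw [hk, hjk]
    push_cast
    ring
  have hlam : μ i ≠ 0 := by
    intro h0
    apply hne
    ext x y
    rw [hDentry x y, h0, hjk, h0]
    push_cast
    ring_nf
    rfl
  have houter_tr : ∀ m, (outer (u m)).trace = 1 := by
    intro m
    rw [Matrix.trace]
    have := spec_col_unit hD m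
    exact this
  have hpure : ∀ m, outer (u m) ∈ PureStates 3 := by
    intro m
    refine ⟨⟨outer_posSemidef _, houter_tr m⟩, outer_rank_one _ ?_⟩
    intro h0
    have := houter_tr m
    rw [h0] at this
    simp [outer, Matrix.trace, Matrix.diag] at this
  have hDeq : D = ((μ i : ℝ) : ℂ) • outer (u i) - ((μ i : ℝ) : ℂ) • outer (u j) := by
    ext x y
    rw [hDentry x y, hjk]
    simp [outer]
    ring
  refine ⟨outer (u i), outer (u j), μ i, hpure i, hpure j, ?_, hlam, hDeq⟩
  intro heq
  apply hne
  rw [hDeq, heq, sub_self]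

lemma trace_mul_im_eq_zero {X Y : Matrix (Fin 3) (Fin 3) ℂ}
    (hX : X.IsHermitian) (hY : Y.IsHermitian) : ((X * Y).trace).im = 0 := by
  apply Complex.conj_eq_iff_im.mp
  calc (starRingEnd ℂ) ((X * Y).trace) = ((X * Y)ᴴ).trace := (Matrix.trace_conjTranspose _).symm
    _ = (Yᴴ * Xᴴ).trace := by rw [Matrix.conjTranspose_mul]
    _ = (Y * X).trace := by rw [hX.eq, hY.eq]
    _ = (X * Y).trace := Matrix.trace_mul_comm _ _

lemma helper3 {D : Matrix (Fin 3) (Fin 3) ℂ} (hD : D.IsHermitian) (hne : D ≠ 0)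
    (htr : D.trace = 0) (hdet : D.det = 0) :
    ∃ (ρ₁ ρ₂ : Matrix (Fin 3) (Fin 3) ℂ) (lam : ℝ), ρ₁ ∈ PureStates 3 ∧ ρ₂ ∈ PureStates 3 ∧
      ρ₁ ≠ ρ₂ ∧ lam ≠ 0 ∧ D = (lam : ℂ) • ρ₁ - (lam : ℂ) • ρ₂ := by
  have hprod := hD.det_eq_prod_eigenvalues
  rw [hdet] at hprod
  obtain ⟨k, -, hk⟩ := Finset.prod_eq_zero_iff.mp hprod.symm
  have hk0 : hD.eigenvalues k = 0 := by
    have : ((hD.eigenvalues k : ℝ) : ℂ) = 0 := hk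
    exact_mod_cast this
  fin_cases k
  · exact helper2 hD hne htr 1 2 0 (fun f => by rw [Fin.sum_univ_three]; ring) hk0
  · exact helper2 hD hne htr 0 2 1 (fun f => by rw [Fin.sum_univ_three]; ring) hk0
  · exact helper2 hD hne htr 0 1 2 (fun f => by rw [Fin.sum_univ_three]) hk0

/-! ### A real-linear parametrization of Hermitian matrices -/

noncomputable def Mfun (a : Fin 9 → ℝ) : Matrix (Fin 3) (Fin 3) ℂ :=
  !![(a 0 : ℂ), (a 3 : ℂ) + (a 4 : ℂ) * Complex.I, (a 5 : ℂ) + (a 6 : ℂ) * Complex.I;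
     (a 3 : ℂ) - (a 4 : ℂ) * Complex.I, (a 1 : ℂ), (a 7 : ℂ) + (a 8 : ℂ) * Complex.I;
     (a 5 : ℂ) - (a 6 : ℂ) * Complex.I, (a 7 : ℂ) - (a 8 : ℂ) * Complex.I, (a 2 : ℂ)]

noncomputable def Mmat : (Fin 9 → ℝ) →ₗ[ℝ] Matrix (Fin 3) (Fin 3) ℂ where
  toFun := Mfun
  map_add' a b := by
    ext i j
    fin_cases i <;> fin_cases j <;> simp [Mfun, Complex.real_smul] <;> ring
  map_smul' c a := by
    ext i j
    fin_cases i <;> fin_cases j <;> simp [Mfun, Complex.real_smul] <;> ring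

lemma Mmat_herm (a : Fin 9 → ℝ) : (Mmat a).IsHermitian := by
  show (Mmat a)ᴴ = Mmat a
  show (Mfun a)ᴴ = Mfun a
  ext i j
  fin_cases i <;> fin_cases j <;>
    simp [Mfun, Matrix.conjTranspose_apply, Complex.ext_iff]

lemma Mmat_inj (a : Fin 9 → ℝ) (h : Mmat a = 0) : a = 0 := by
  have he : ∀ i j, (Mfun a) i j = 0 := fun i j => congr_fun (congr_fun h i) j
  have e00 := he 0 0
  have e11 := he 1 1
  have e22 := he 2 2
  have e01 := he 0 1
  have e02 := he 0 2
  have e12 := he 1 2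
  simp only [Mfun, Matrix.cons_val', Matrix.cons_val_zero, Matrix.cons_val_one,
    Matrix.head_cons, Matrix.empty_val', Matrix.cons_val_fin_one, Matrix.head_fin_const,
    Matrix.cons_val_two, Matrix.tail_cons] at e00 e11 e22 e01 e02 e12
  rw [Complex.ext_iff] at e00 e11 e22 e01 e02 e12
  simp at e00 e11 e22 e01 e02 e12
  funext k
  fin_cases k <;> simp_all

/-! ### The lower bound -/

lemma lower_bound (n : ℕ) (A : Fin n → Matrix (Fin 3) (Fin 3) ℂ)
    (hP : IsPOVM A) (hIC : IsIC A (PureStates 3)) : 8 ≤ n := by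
  by_contra hn
  push_neg at hn
  obtain ⟨hpsd, hsum1⟩ := hP
  let L : (Fin 9 → ℝ) →ₗ[ℝ] (Fin n → ℝ) :=
    { toFun := fun a j => ((Mmat a * A j).trace).re
      map_add' := by
        intro a b
        funext j
        simp [add_mul, Matrix.trace_add]
      map_smul' := by
        intro c a
        funext j
        simp [LinearMap.map_smul, smul_mul_assoc, Matrix.trace_smul, Complex.real_smul,
          Complex.mul_re] }
  have hker2 : 2 ≤ Module.finrank ℝ (LinearMap.ker L) := by
    have h1 := LinearMap.finrank_range_add_finrank_ker L
    have h2 : Module.finrank ℝ (LinearMap.range L) ≤ n :=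
      le_trans (Submodule.finrank_le _) (by simp)
    have h3 : Module.finrank ℝ (Fin 9 → ℝ) = 9 := by simp
    omega
  let bb := Module.finBasis ℝ (LinearMap.ker L)
  let i0 : Fin (Module.finrank ℝ (LinearMap.ker L)) := ⟨0, by omega⟩
  let i1 : Fin (Module.finrank ℝ (LinearMap.ker L)) := ⟨1, by omega⟩
  have hi01 : i0 ≠ i1 := by simp [i0, i1, Fin.ext_iff]
  have hind : ∀ s t : ℝ, s • ((bb i0 : Fin 9 → ℝ)) + t • ((bb i1 : Fin 9 → ℝ)) = 0 →
      s = 0 ∧ t = 0 := by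
    intro s t hst
    have h0 : s • bb i0 + t • bb i1 = (0 : LinearMap.ker L) := by
      apply Subtype.ext
      simpa using hst
    have hs := congrArg (fun x => bb.repr x i0) h0
    have ht := congrArg (fun x => bb.repr x i1) h0
    simp [Module.Basis.repr_self, Finsupp.single_apply, hi01, hi01.symm] at hs ht
    exact ⟨hs, ht⟩
  set MA := Mmat (bb i0 : Fin 9 → ℝ) with hMA
  set MB := Mmat (bb i1 : Fin 9 → ℝ) with hMB
  let g : ℝ → ℝ := fun θ => ((Real.cos θ • MA + Real.sin θ • MB).det).re
  have hgc : Continuous g := by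
    apply Complex.continuous_re.comp
    apply Continuous.matrix_det
    exact ((Real.continuous_cos.smul continuous_const).add
      (Real.continuous_sin.smul continuous_const))
  have hgπ : g Real.pi = - g 0 := by
    simp only [g, Real.cos_pi, Real.sin_pi, Real.cos_zero, Real.sin_zero]
    rw [show (-1 : ℝ) • MA + (0:ℝ) • MB = -((1:ℝ) • MA + (0:ℝ) • MB) by
      simp [neg_smul]]
    rw [Matrix.det_neg]
    norm_num
  have hθ : ∃ θ, g θ = 0 := by
    rcases le_total (g 0) 0 with h | h
    · have h0 : (0:ℝ) ∈ Set.Icc (g 0) (g Real.pi) := by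
        constructor
        · exact h
        · rw [hgπ]; linarith
      obtain ⟨θ, -, hθ⟩ := intermediate_value_Icc Real.pi_pos.le hgc.continuousOn h0
      exact ⟨θ, hθ⟩
    · have h0 : (0:ℝ) ∈ Set.Icc (g Real.pi) (g 0) := by
        constructor
        · rw [hgπ]; linarith
        · exact h
      obtain ⟨θ, -, hθ⟩ := intermediate_value_Icc' Real.pi_pos.le hgc.continuousOn h0
      exact ⟨θ, hθ⟩
  obtain ⟨θ, hgθ⟩ := hθ
  set c : Fin 9 → ℝ := Real.cos θ • (bb i0 : Fin 9 → ℝ) + Real.sin θ • (bb i1 : Fin 9 → ℝ)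
    with hc
  set D := Mmat c with hDdef
  have hDeq : D = Real.cos θ • MA + Real.sin θ • MB := by
    rw [hDdef, hc, map_add, Mmat.map_smul, Mmat.map_smul, hMA, hMB]
  have hDherm : D.IsHermitian := Mmat_herm c
  have hcker : c ∈ LinearMap.ker L := by
    have := (LinearMap.ker L).add_mem
      ((LinearMap.ker L).smul_mem (Real.cos θ) (bb i0).2)
      ((LinearMap.ker L).smul_mem (Real.sin θ) (bb i1).2)
    simpa [hc] using this
  have hLc : ∀ j, ((D * A j).trace).re = 0 := by
    intro j
    have h := LinearMap.mem_ker.mp hcker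
    exact congr_fun h j
  have hDA : ∀ j, (D * A j).trace = 0 := by
    intro j
    have him := trace_mul_im_eq_zero hDherm (hpsd j).isHermitian
    exact Complex.ext (hLc j) him
  have htrD : D.trace = 0 := by
    have : D.trace = (D * 1).trace := by rw [mul_one]
    rw [this, ← hsum1, Matrix.mul_sum, Matrix.trace_sum]
    simp [hDA]
  have hDne : D ≠ 0 := by
    intro h0
    obtain ⟨hcos, hsin⟩ := hind _ _ (by
      have := Mmat_inj c h0
      simpa [hc] using this)
    have := Real.sin_sq_add_cos_sq θ
    rw [hcos, hsin] at this
    norm_num at this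
  have hdet : D.det = 0 := by
    apply Complex.ext
    · rw [hDeq]; exact hgθ
    · apply Complex.conj_eq_iff_im.mp
      calc (starRingEnd ℂ) (D.det) = (Dᴴ).det := (Matrix.det_conjTranspose D).symm
        _ = D.det := by rw [hDherm.eq]
  obtain ⟨ρ₁, ρ₂, lam, hp1, hp2, hne12, hlam, hEq⟩ := helper3 hDherm hDne htrD hdet
  have hμ : ∀ j, (ρ₁ * A j).trace = (ρ₂ * A j).trace := by
    intro j
    have h := hDA j
    rw [hEq, sub_mul, smul_mul_assoc, smul_mul_assoc, Matrix.trace_sub, Matrix.trace_smul,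
      Matrix.trace_smul] at h
    have hl : (lam : ℂ) ≠ 0 := Complex.ofReal_ne_zero.mpr hlam
    have : (lam : ℂ) * (ρ₁ * A j).trace = (lam : ℂ) * (ρ₂ * A j).trace := by
      simp only [smul_eq_mul] at h
      linear_combination h
    exact mul_left_cancel₀ hl this
  exact hne12 (hIC ρ₁ hp1 ρ₂ hp2 hμ)

/-! ### The 8-outcome POVM -/

noncomputable def povm : Fin 8 → Matrix (Fin 3) (Fin 3) ℂ
  | 0 => !![9/64,0,0; 0,7/64,0; 0,0,8/64]
  | 1 => !![8/64,1/64,0; 1/64,8/64,0; 0,0,8/64]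
  | 2 => !![8/64,Complex.I/64,0; -Complex.I/64,8/64,0; 0,0,8/64]
  | 3 => !![8/64,0,1/64; 0,8/64,0; 1/64,0,8/64]
  | 4 => !![8/64,0,Complex.I/64; 0,8/64,0; -Complex.I/64,0,8/64]
  | 5 => !![8/64,0,0; 0,8/64,1/64; 0,1/64,8/64]
  | 6 => !![8/64,0,0; 0,8/64,Complex.I/64; 0,-Complex.I/64,8/64]
  | 7 => !![7/64,(-1-Complex.I)/64,(-1-Complex.I)/64;
            (-1+Complex.I)/64,9/64,(-1-Complex.I)/64;
            (-1+Complex.I)/64,(-1+Complex.I)/64,8/64]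

lemma povm_sum : ∑ j, povm j = 1 := by
  rw [Fin.sum_univ_eight, Matrix.one_fin_three]
  show (!![9/64,0,0; 0,7/64,0; 0,0,8/64] : Matrix (Fin 3) (Fin 3) ℂ) + _ + _ + _ + _ + _ + _ + _ = _
  norm_num [povm]
  refine ⟨?_, ⟨?_, ?_⟩, ?_⟩ <;> ring

lemma diag_nonneg (x y z : ℝ) (hx : 0 ≤ x) (hy : 0 ≤ y) (hz : 0 ≤ z) :
    (0 : Fin 3 → ℂ) ≤ ![(x:ℂ), (y:ℂ), (z:ℂ)] := by
  intro i
  fin_cases i <;> simp [Complex.le_def, *]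

set_option maxHeartbeats 2000000 in
lemma povm_psd (j : Fin 8) : (povm j).PosSemidef := by
  have hdec0 : povm 0 = Matrix.diagonal ![(9/64 : ℂ), 7/64, 8/64] := by
    ext i j
    fin_cases i <;> fin_cases j <;>
      norm_num [povm, Matrix.diagonal, Complex.ext_iff, Fin.ext_iff]
  have hdec1 : povm 1 = outer ![1/8,1/8,0] + Matrix.diagonal ![(7/64 : ℂ),7/64,8/64] := by
    ext i j
    fin_cases i <;> fin_cases j <;>
      norm_num [povm, outer, Matrix.diagonal, Complex.ext_iff, Fin.ext_iff, Complex.star_def,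
        map_div₀, Complex.conj_I, Complex.conj_ofNat]
  have hdec2 : povm 2 = outer ![1/8,-Complex.I/8,0] +
      Matrix.diagonal ![(7/64 : ℂ),7/64,8/64] := by
    ext i j
    fin_cases i <;> fin_cases j <;>
      norm_num [povm, outer, Matrix.diagonal, Complex.ext_iff, Fin.ext_iff, Complex.star_def,
        map_div₀, Complex.conj_I, Complex.conj_ofNat]
  have hdec3 : povm 3 = outer ![1/8,0,1/8] + Matrix.diagonal ![(7/64 : ℂ),8/64,7/64] := by
    ext i j
    fin_cases i <;> fin_cases j <;>
      norm_num [povm, outer, Matrix.diagonal, Complex.ext_iff, Fin.ext_iff, Complex.star_def,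
        map_div₀, Complex.conj_I, Complex.conj_ofNat]
  have hdec4 : povm 4 = outer ![1/8,0,-Complex.I/8] +
      Matrix.diagonal ![(7/64 : ℂ),8/64,7/64] := by
    ext i j
    fin_cases i <;> fin_cases j <;>
      norm_num [povm, outer, Matrix.diagonal, Complex.ext_iff, Fin.ext_iff, Complex.star_def,
        map_div₀, Complex.conj_I, Complex.conj_ofNat]
  have hdec5 : povm 5 = outer ![0,1/8,1/8] + Matrix.diagonal ![(8/64 : ℂ),7/64,7/64] := by
    ext i j
    fin_cases i <;> fin_cases j <;>
      norm_num [povm, outer, Matrix.diagonal, Complex.ext_iff, Fin.ext_iff, Complex.star_def,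
        map_div₀, Complex.conj_I, Complex.conj_ofNat]
  have hdec6 : povm 6 = outer ![0,1/8,-Complex.I/8] +
      Matrix.diagonal ![(8/64 : ℂ),7/64,7/64] := by
    ext i j
    fin_cases i <;> fin_cases j <;>
      norm_num [povm, outer, Matrix.diagonal, Complex.ext_iff, Fin.ext_iff, Complex.star_def,
        map_div₀, Complex.conj_I, Complex.conj_ofNat]
  have hdec7 : povm 7 = outer ![1/8,-1/8,0] + outer ![1/8,Complex.I/8,0] +
      outer ![1/8,0,-1/8] + outer ![1/8,0,Complex.I/8] + outer ![0,1/8,-1/8] +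
      outer ![0,1/8,Complex.I/8] + Matrix.diagonal ![(3/64 : ℂ),5/64,4/64] := by
    ext i j
    fin_cases i <;> fin_cases j <;>
      norm_num [povm, outer, Matrix.diagonal, Complex.ext_iff, Fin.ext_iff, Complex.star_def,
        map_div₀, Complex.conj_I, Complex.conj_ofNat]
  have hd : ∀ (x y z : ℝ), 0 ≤ x → 0 ≤ y → 0 ≤ z →
      (Matrix.diagonal ![(x:ℂ), (y:ℂ), (z:ℂ)]).PosSemidef := by
    intro x y z hx hy hz
    exact Matrix.PosSemidef.diagonal (diag_nonneg x y z hx hy hz)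
  have h9 : ((9:ℝ)/64 : ℂ) = ((9/64 : ℝ) : ℂ) := by norm_num
  fin_cases j
  · show (povm 0).PosSemidef
    rw [hdec0]
    have := hd (9/64) (7/64) (8/64) (by norm_num) (by norm_num) (by norm_num)
    convert this using 2 <;> norm_num
  · show (povm 1).PosSemidef
    rw [hdec1]
    refine Matrix.PosSemidef.add (outer_posSemidef _) ?_
    have := hd (7/64) (7/64) (8/64) (by norm_num) (by norm_num) (by norm_num)
    convert this using 2 <;> norm_num
  · show (povm 2).PosSemidef
    rw [hdec2]
    refine Matrix.PosSemidef.add (outer_posSemidef _) ?_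
    have := hd (7/64) (7/64) (8/64) (by norm_num) (by norm_num) (by norm_num)
    convert this using 2 <;> norm_num
  · show (povm 3).PosSemidef
    rw [hdec3]
    refine Matrix.PosSemidef.add (outer_posSemidef _) ?_
    have := hd (7/64) (8/64) (7/64) (by norm_num) (by norm_num) (by norm_num)
    convert this using 2 <;> norm_num
  · show (povm 4).PosSemidef
    rw [hdec4]
    refine Matrix.PosSemidef.add (outer_posSemidef _) ?_
    have := hd (7/64) (8/64) (7/64) (by norm_num) (by norm_num) (by norm_num)
    convert this using 2 <;> norm_num
  · show (povm 5).PosSemidef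
    rw [hdec5]
    refine Matrix.PosSemidef.add (outer_posSemidef _) ?_
    have := hd (8/64) (7/64) (7/64) (by norm_num) (by norm_num) (by norm_num)
    convert this using 2 <;> norm_num
  · show (povm 6).PosSemidef
    rw [hdec6]
    refine Matrix.PosSemidef.add (outer_posSemidef _) ?_
    have := hd (8/64) (7/64) (7/64) (by norm_num) (by norm_num) (by norm_num)
    convert this using 2 <;> norm_num
  · show (povm 7).PosSemidef
    rw [hdec7]
    refine Matrix.PosSemidef.add (Matrix.PosSemidef.add (Matrix.PosSemidef.add
      (Matrix.PosSemidef.add (Matrix.PosSemidef.add (Matrix.PosSemidef.add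
      (outer_posSemidef _) (outer_posSemidef _)) (outer_posSemidef _))
      (outer_posSemidef _)) (outer_posSemidef _)) (outer_posSemidef _)) ?_
    have := hd (3/64) (5/64) (4/64) (by norm_num) (by norm_num) (by norm_num)
    convert this using 2 <;> norm_num

lemma finmk0 (h : 0 < 3) : (⟨0, h⟩ : Fin 3) = 0 := rfl
lemma finmk1 (h : 1 < 3) : (⟨1, h⟩ : Fin 3) = 1 := rfl
lemma finmk2 (h : 2 < 3) : (⟨2, h⟩ : Fin 3) = 2 := rfl

set_option maxHeartbeats 2000000 in
lemma povm_key (ρ₁ ρ₂ : Matrix (Fin 3) (Fin 3) ℂ)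
    (h : ∀ j, (ρ₁ * povm j).trace = (ρ₂ * povm j).trace)
    (t1 : ρ₁.trace = 1) (t2 : ρ₂.trace = 1) :
    ρ₁ - ρ₂ = (ρ₁ 0 0 - ρ₂ 0 0) • !![1,0,0;0,1,0;0,0,(-2:ℂ)] := by
  have E0 := h 0
  have E1 := h 1
  have E2 := h 2
  have E3 := h 3
  have E4 := h 4
  have E5 := h 5
  have E6 := h 6
  simp only [povm, Matrix.trace_fin_three, Matrix.mul_apply, Fin.sum_univ_three,
    Matrix.of_apply, Matrix.cons_val', Matrix.cons_val_zero, Matrix.cons_val_one,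
    Matrix.head_cons, Matrix.empty_val', Matrix.cons_val_fin_one, Matrix.head_fin_const,
    Matrix.cons_val_two, Matrix.tail_cons] at E0 E1 E2 E3 E4 E5 E6
  rw [Matrix.trace_fin_three] at t1 t2
  rw [Complex.ext_iff] at E0 E1 E2 E3 E4 E5 E6 t1 t2
  simp only [Complex.add_re, Complex.add_im, Complex.mul_re, Complex.mul_im,
    Complex.div_re, Complex.div_im, Complex.I_re, Complex.I_im, Complex.neg_re,
    Complex.neg_im, Complex.re_ofNat, Complex.im_ofNat, Complex.one_re, Complex.one_im,
    Complex.zero_re, Complex.zero_im, Complex.normSq] at E0 E1 E2 E3 E4 E5 E6 t1 t2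
  norm_num at E0 E1 E2 E3 E4 E5 E6 t1 t2
  obtain ⟨E0r, E0i⟩ := E0
  obtain ⟨E1r, E1i⟩ := E1
  obtain ⟨E2r, E2i⟩ := E2
  obtain ⟨E3r, E3i⟩ := E3
  obtain ⟨E4r, E4i⟩ := E4
  obtain ⟨E5r, E5i⟩ := E5
  obtain ⟨E6r, E6i⟩ := E6
  obtain ⟨t1r, t1i⟩ := t1
  obtain ⟨t2r, t2i⟩ := t2
  ext i j
  fin_cases i <;> fin_cases j <;>
    (simp only [finmk0, finmk1, finmk2, Matrix.sub_apply, Matrix.smul_apply, Matrix.of_apply,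
      Matrix.cons_val', Matrix.cons_val_zero, Matrix.cons_val_one, Matrix.head_cons,
      Matrix.empty_val', Matrix.cons_val_fin_one, Matrix.head_fin_const, Matrix.cons_val_two,
      Matrix.tail_cons, smul_eq_mul]
     rw [Complex.ext_iff]
     constructor <;>
       simp only [Complex.sub_re, Complex.sub_im, Complex.mul_re, Complex.mul_im,
         Complex.re_ofNat, Complex.im_ofNat, Complex.one_re, Complex.one_im,
         Complex.zero_re, Complex.zero_im, Complex.neg_re, Complex.neg_im] <;>
       norm_num <;> linarith)

lemma povm_ic : IsIC povm (PureStates 3) := by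
  rintro ρ₁ ⟨⟨hpsd1, htr1⟩, hrk1⟩ ρ₂ ⟨⟨hpsd2, htr2⟩, hrk2⟩ h
  have hD := povm_key ρ₁ ρ₂ h htr1 htr2
  have hc : ρ₁ 0 0 - ρ₂ 0 0 = 0 := by
    by_contra hc
    have hdet : ((ρ₁ 0 0 - ρ₂ 0 0) • !![1,0,0;0,1,0;0,0,(-2:ℂ)]).det ≠ 0 := by
      rw [Matrix.det_smul]
      have hdH : (!![1,0,0;0,1,0;0,0,(-2:ℂ)]).det = -2 := by
        rw [Matrix.det_fin_three]
        norm_num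
        simp [Matrix.vecHead, Matrix.vecTail]
      rw [hdH]
      simp only [Fintype.card_fin]
      exact mul_ne_zero (pow_ne_zero _ hc) (by norm_num)
    have hunit : IsUnit ((ρ₁ 0 0 - ρ₂ 0 0) • !![1,0,0;0,1,0;0,0,(-2:ℂ)]) :=
      (Matrix.isUnit_iff_isUnit_det _).mpr (isUnit_iff_ne_zero.mpr hdet)
    have hr3 := Matrix.rank_of_isUnit _ hunit
    rw [← hD] at hr3
    have hr2 : (ρ₁ - ρ₂).rank ≤ 2 := by
      rw [sub_eq_add_neg]
      calc (ρ₁ + -ρ₂).rank ≤ ρ₁.rank + (-ρ₂).rank := myrank_add_le _ _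
        _ = ρ₁.rank + ρ₂.rank := by rw [myrank_neg]
        _ = 2 := by rw [hrk1, hrk2]
    rw [hr3] at hr2
    simp [Fintype.card_fin] at hr2
  rw [hc, zero_smul] at hD
  exact sub_eq_zero.mp hD

/-- A minimal POVM on `ℂ³` which is informationally complete w.r.t. the pure states has exactly
`8` outcomes: every such POVM has at least `8` outcomes and one with `8` outcomes exists. -/
theorem pure_state_ic_dim3_minimal :
    (∀ (n : ℕ) (A : Fin n → Matrix (Fin 3) (Fin 3) ℂ),
        IsPOVM A → IsIC A (PureStates 3) → 8 ≤ n) ∧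
    (∃ A : Fin 8 → Matrix (Fin 3) (Fin 3) ℂ, IsPOVM A ∧ IsIC A (PureStates 3)) := by
  constructor
  · exact lower_bound
  · exact ⟨povm, ⟨povm_psd, povm_sum⟩, povm_ic⟩
end

section
/- Let X and Y be selfadjoint matrices in Matrix (Fin 3) (Fin 3) ℂ which are linearly independent over ℝ. Then there exist real numbers s and t, not both zero, such that det(s • X + t • Y) = 0; in other words, the real span of {X, Y} contains a nonzero singular selfadjoint matrix. -/
open Matrix

lemma herm_det_real {M : Matrix (Fin 3) (Fin 3) ℂ} (h : M.IsHermitian) :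
    ((M.det.re : ℂ)) = M.det := by
  have := Matrix.det_conjTranspose M
  rw [h] at this
  exact Complex.conj_eq_iff_re.mp this.symm

lemma real_smul_matrix (t : ℝ) (M : Matrix (Fin 3) (Fin 3) ℂ) :
    t • M = (t : ℂ) • M := by
  ext i j
  simp [Matrix.smul_apply, Complex.real_smul]

/-- The key step in the proof of Prop. 8: the real span of two ℝ-linearly independent
selfadjoint `3 × 3` complex matrices contains a nonzero singular (selfadjoint) matrix. -/
theorem exists_singular_in_real_span (X Y : Matrix (Fin 3) (Fin 3) ℂ)
    (hX : X.IsHermitian) (hY : Y.IsHermitian)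
    (hind : LinearIndependent ℝ ![X, Y]) :
    ∃ s t : ℝ, (s ≠ 0 ∨ t ≠ 0) ∧ (s • X + t • Y).det = 0 := by
  by_cases hdY : Y.det = 0
  · exact ⟨0, 1, Or.inr one_ne_zero, by simpa⟩
  set g : ℝ → ℝ := fun u => ((Y + u • X).det).re with hgdef
  set f : ℝ → ℝ := fun t => ((X + t • Y).det).re with hfdef
  have hgherm : ∀ u : ℝ, (Y + u • X).IsHermitian := fun u => hY.add (IsSelfAdjoint.smul (star_trivial u) hX)
  have hfherm : ∀ t : ℝ, (X + t • Y).IsHermitian := fun t => hX.add (IsSelfAdjoint.smul (star_trivial t) hY)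
  have hgcont : Continuous g := by
    apply Complex.continuous_re.comp
    exact (continuous_const.add (continuous_id.smul continuous_const)).matrix_det
  have hfcont : Continuous f := by
    apply Complex.continuous_re.comp
    exact (continuous_const.add (continuous_id.smul continuous_const)).matrix_det
  set r : ℝ := g 0 with hrdef
  have hr0 : (r : ℂ) = Y.det := by
    have := herm_det_real hY
    simpa [hrdef, hgdef] using this
  have hrne : r ≠ 0 := by
    intro h
    rw [h] at hr0
    exact hdY (by simpa using hr0.symm)
  -- near 0, r * g u > 0
  have hca : ContinuousAt (fun u => r * g u) 0 := (continuous_const.mul hgcont).continuousAt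
  have hpos : 0 < r * g 0 := by
    rw [← hrdef]
    exact mul_self_pos.mpr hrne
  have hev : ∀ᶠ u in nhds (0 : ℝ), 0 < r * g u := hca.eventually_const_lt hpos
  obtain ⟨δ, hδ0, hδ⟩ := Metric.eventually_nhds_iff.mp hev
  -- key identity: f t = t ^ 3 * g t⁻¹ for t ≠ 0
  have key : ∀ t : ℝ, t ≠ 0 → f t = t ^ 3 * g t⁻¹ := by
    intro t ht
    have hM : X + t • Y = (t : ℂ) • (Y + t⁻¹ • X) := by
      rw [real_smul_matrix, real_smul_matrix, smul_add, smul_smul]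
      push_cast
      rw [mul_inv_cancel₀ (by exact_mod_cast ht : (t : ℂ) ≠ 0), one_smul]
      abel
    have : (X + t • Y).det = (t : ℂ) ^ 3 * (Y + t⁻¹ • X).det := by
      rw [hM, Matrix.det_smul]
      norm_num
    rw [hfdef]
    simp only [this]
    rw [← herm_det_real (hgherm t⁻¹), ← Complex.ofReal_pow, ← Complex.ofReal_mul,
      Complex.ofReal_re]
  set T : ℝ := 1 / δ + 1 with hTdef
  have hT0 : 0 < T := by positivity
  have hTinv : |T⁻¹| < δ := by
    rw [abs_of_pos (inv_pos.mpr hT0)]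
    rw [inv_lt_comm₀ hT0 hδ0, hTdef, one_div]
    linarith
  have hgpos : ∀ u : ℝ, |u| < δ → 0 < r * g u := by
    intro u hu
    exact hδ (by simpa using hu)
  have hFT : 0 < r * f T := by
    rw [key T (ne_of_gt hT0)]
    have := hgpos T⁻¹ hTinv
    calc (0:ℝ) < T ^ 3 * (r * g T⁻¹) := by positivity
    _ = r * (T ^ 3 * g T⁻¹) := by ring
  have hFnT : r * f (-T) < 0 := by
    rw [key (-T) (by linarith [hT0] : (-T : ℝ) ≠ 0)]
    have h2 : |(-T)⁻¹| < δ := by rwa [abs_inv, abs_neg, ← abs_inv]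
    have := hgpos (-T)⁻¹ h2
    have hlt : 0 < T ^ 3 * (r * g (-T)⁻¹) := by positivity
    nlinarith [hlt]
  -- IVT
  have hcont : ContinuousOn (fun t => r * f t) (Set.Icc (-T) T) :=
    (continuous_const.mul hfcont).continuousOn
  have hmem : (0 : ℝ) ∈ Set.Icc (r * f (-T)) (r * f T) := ⟨le_of_lt hFnT, le_of_lt hFT⟩
  obtain ⟨t₀, _, ht₀⟩ := intermediate_value_Icc (by linarith : (-T : ℝ) ≤ T) hcont hmem
  have hf0 : f t₀ = 0 := by
    have : r * f t₀ = 0 := ht₀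
    exact (mul_eq_zero.mp this).resolve_left hrne
  refine ⟨1, t₀, Or.inl one_ne_zero, ?_⟩
  rw [one_smul]
  rw [← herm_det_real (hfherm t₀)]
  rw [show ((X + t₀ • Y).det).re = f t₀ from rfl, hf0]
  simp
end

section
/- Let d ≥ 1 and, for each γ ∈ {2, 3, …, 2d}, let C_γ ∈ Matrix (Fin d) (Fin d) ℂ satisfy (indexing entries by k, l ∈ {1, …, d}): (C_γ)_{kl} = 0 whenever k > l (upper triangularity); (C_γ)_{kl} = 0 whenever k + l > γ; and (C_γ)_{kl} ≠ 0 whenever k ≤ l and k + l = γ. If x, y ∈ ℂ^d satisfy ⟨x, C_γ x⟩ = ⟨y, C_γ y⟩ for all γ ∈ {2, …, 2d}, where ⟨u, v⟩ = ∑_k conj(u_k) v_k, then there exists φ ∈ ℝ with y = exp(i φ) • x. -/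
open Matrix

/-- The key lemma (Eq. (4) of the paper, following James): let `C γ` (for `γ = 2, …, 2d`) be
upper triangular matrices whose entries `(C γ)_{k l}` (with the 1-based indexing `k = k₀ + 1`,
`l = l₀ + 1` for `k₀ l₀ : Fin d`) vanish when `k + l > γ` and are nonzero when `k ≤ l` and
`k + l = γ`. If `⟨x, C γ x⟩ = ⟨y, C γ y⟩` for all such `γ`, then `y = e^{iφ} x` for some real
`φ`. -/
theorem james_lemma (d : ℕ) (hd : 1 ≤ d)
    (C : ℕ → Matrix (Fin d) (Fin d) ℂ)
    (h_upper : ∀ γ, 2 ≤ γ → γ ≤ 2 * d → ∀ k l : Fin d, (l : ℕ) < (k : ℕ) → C γ k l = 0)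
    (h_zero : ∀ γ, 2 ≤ γ → γ ≤ 2 * d → ∀ k l : Fin d,
      γ < ((k : ℕ) + 1) + ((l : ℕ) + 1) → C γ k l = 0)
    (h_nonzero : ∀ γ, 2 ≤ γ → γ ≤ 2 * d → ∀ k l : Fin d,
      (k : ℕ) ≤ (l : ℕ) → ((k : ℕ) + 1) + ((l : ℕ) + 1) = γ → C γ k l ≠ 0)
    (x y : EuclideanSpace ℂ (Fin d))
    (h_exp : ∀ γ, 2 ≤ γ → γ ≤ 2 * d →
      ∑ k, ∑ l, (starRingEnd ℂ) (x k) * C γ k l * x l =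
      ∑ k, ∑ l, (starRingEnd ℂ) (y k) * C γ k l * y l) :
    ∃ φ : ℝ, y = Complex.exp (Complex.I * φ) • x := by
  -- the workhorse: isolate a single entry on the anti-diagonal
  have key : ∀ k₀ l₀ : Fin d, (k₀ : ℕ) ≤ (l₀ : ℕ) →
      (∀ k l : Fin d, (k : ℕ) ≤ (l : ℕ) → (k : ℕ) + (l : ℕ) ≤ (k₀ : ℕ) + (l₀ : ℕ) →
        ¬((k : ℕ) = (k₀ : ℕ) ∧ (l : ℕ) = (l₀ : ℕ)) →
        (starRingEnd ℂ) (x k) * x l = (starRingEnd ℂ) (y k) * y l) →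
      (starRingEnd ℂ) (x k₀) * x l₀ = (starRingEnd ℂ) (y k₀) * y l₀ := by
    intro k₀ l₀ hkl hprev
    set γ := (k₀ : ℕ) + (l₀ : ℕ) + 2 with hγ
    have hγ2 : 2 ≤ γ := by omega
    have hγd : γ ≤ 2 * d := by have := k₀.isLt; have := l₀.isLt; omega
    have hCzero : ∀ k l : Fin d, ¬((k : ℕ) ≤ (l : ℕ) ∧ (k : ℕ) + (l : ℕ) + 2 ≤ γ) →
        C γ k l = 0 := by
      intro k l h
      by_cases h1 : (l : ℕ) < (k : ℕ)
      · exact h_upper γ hγ2 hγd k l h1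
      · exact h_zero γ hγ2 hγd k l (by omega)
    have hterm : ∀ k l : Fin d,
        C γ k l * ((starRingEnd ℂ) (x k) * x l - (starRingEnd ℂ) (y k) * y l) =
        (starRingEnd ℂ) (x k) * C γ k l * x l - (starRingEnd ℂ) (y k) * C γ k l * y l := by
      intro k l; ring
    have hsum0 : ∑ k, ∑ l,
        C γ k l * ((starRingEnd ℂ) (x k) * x l - (starRingEnd ℂ) (y k) * y l) = 0 := by
      simp_rw [hterm, Finset.sum_sub_distrib]
      rw [h_exp γ hγ2 hγd, sub_self]
    have hzero_term : ∀ k l : Fin d, ¬((k : ℕ) = (k₀ : ℕ) ∧ (l : ℕ) = (l₀ : ℕ)) →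
        C γ k l * ((starRingEnd ℂ) (x k) * x l - (starRingEnd ℂ) (y k) * y l) = 0 := by
      intro k l hne
      by_cases hc : (k : ℕ) ≤ (l : ℕ) ∧ (k : ℕ) + (l : ℕ) + 2 ≤ γ
      · have := hprev k l hc.1 (by omega) hne
        rw [sub_eq_zero.mpr this, mul_zero]
      · rw [hCzero _ _ hc, zero_mul]
    have hsingle : ∑ k, ∑ l,
        C γ k l * ((starRingEnd ℂ) (x k) * x l - (starRingEnd ℂ) (y k) * y l) =
        C γ k₀ l₀ * ((starRingEnd ℂ) (x k₀) * x l₀ - (starRingEnd ℂ) (y k₀) * y l₀) := by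
      rw [Finset.sum_eq_single k₀]
      · rw [Finset.sum_eq_single l₀]
        · intro l _ hne
          exact hzero_term k₀ l (by rintro ⟨_, h2⟩; exact hne (Fin.ext h2))
        · intro h; exact absurd (Finset.mem_univ l₀) h
      · intro k _ hne
        exact Finset.sum_eq_zero fun l _ =>
          hzero_term k l (by rintro ⟨h1, _⟩; exact hne (Fin.ext h1))
      · intro h; exact absurd (Finset.mem_univ k₀) h
    have hCne : C γ k₀ l₀ ≠ 0 := h_nonzero γ hγ2 hγd k₀ l₀ hkl (by omega)
    have := hsingle.symm.trans hsum0
    rcases mul_eq_zero.mp this with h | h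
    · exact absurd h hCne
    · exact sub_eq_zero.mp h
  -- Phase 1: if x vanishes up to index i, then y i = 0.
  have V : ∀ n : ℕ, ∀ i : Fin d, (i : ℕ) = n →
      (∀ i' : Fin d, (i' : ℕ) ≤ (i : ℕ) → x i' = 0) → y i = 0 := by
    intro n
    induction n using Nat.strong_induction_on with
    | _ n ih =>
      intro i hin hx
      have hΔii : (starRingEnd ℂ) (x i) * x i = (starRingEnd ℂ) (y i) * y i := by
        apply key i i le_rfl
        intro k l hkl hsum hne
        have hki : (k : ℕ) < (i : ℕ) := by omega
        have hxk : x k = 0 := hx k (by omega)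
        have hyk : y k = 0 := ih (k : ℕ) (by omega) k rfl (fun i' h => hx i' (by omega))
        rw [hxk, hyk]; simp
      have hxi : x i = 0 := hx i le_rfl
      rw [hxi] at hΔii
      simp only [map_zero, zero_mul] at hΔii
      rcases mul_eq_zero.mp hΔii.symm with h | h
      · exact map_eq_zero _ |>.mp h
      · exact h
  by_cases hx0 : ∀ i, x i = 0
  · refine ⟨0, ?_⟩
    have hy0 : ∀ i, y i = 0 := fun i => V (i : ℕ) i rfl (fun i' _ => hx0 i')
    ext i
    simp [hx0 i, hy0 i]
  · push_neg at hx0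
    obtain ⟨i0, hi0⟩ := hx0
    have hex : ∃ n : ℕ, ∃ i : Fin d, (i : ℕ) = n ∧ x i ≠ 0 := ⟨(i0 : ℕ), i0, rfl, hi0⟩
    classical
    obtain ⟨j, hjn, hxj⟩ := Nat.find_spec hex
    have hxlt : ∀ i : Fin d, (i : ℕ) < (j : ℕ) → x i = 0 := by
      intro i hi
      by_contra h
      exact Nat.find_min hex (by omega : (i : ℕ) < Nat.find hex) ⟨i, rfl, h⟩
    have hylt : ∀ i : Fin d, (i : ℕ) < (j : ℕ) → y i = 0 := by
      intro i hi
      exact V (i : ℕ) i rfl (fun i' h => hxlt i' (by omega))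
    have hΔjj : (starRingEnd ℂ) (x j) * x j = (starRingEnd ℂ) (y j) * y j := by
      apply key j j le_rfl
      intro k l hkl hsum hne
      have hkj : (k : ℕ) < (j : ℕ) := by omega
      rw [hxlt k hkj, hylt k hkj]; simp
    have hxjne : (starRingEnd ℂ) (x j) * x j ≠ 0 :=
      mul_ne_zero (by simpa using hxj) hxj
    -- Phase 3: conj (x j) * x l = conj (y j) * y l for all l ≥ j
    have D : ∀ m : ℕ, ∀ l : Fin d, (l : ℕ) = m → (j : ℕ) ≤ (l : ℕ) →
        (starRingEnd ℂ) (x j) * x l = (starRingEnd ℂ) (y j) * y l := by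
      intro m
      induction m using Nat.strong_induction_on with
      | _ m ih =>
        intro l hlm hjl
        apply key j l hjl
        intro k m' hkm hsum hne
        rcases lt_trichotomy (k : ℕ) (j : ℕ) with hlt | heq | hgt
        · rw [hxlt k hlt, hylt k hlt]; simp
        · have hk : k = j := Fin.ext heq
          subst hk
          have hm'l : (m' : ℕ) < (l : ℕ) := by omega
          exact ih (m' : ℕ) (by omega) m' rfl (by omega)
        · have hm'l : (m' : ℕ) < (l : ℕ) := by omega
          have hkl' : (k : ℕ) < (l : ℕ) := by omega
          have h1 : (starRingEnd ℂ) (x j) * x k = (starRingEnd ℂ) (y j) * y k :=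
            ih (k : ℕ) (by omega) k rfl (by omega)
          have h2 : (starRingEnd ℂ) (x j) * x m' = (starRingEnd ℂ) (y j) * y m' :=
            ih (m' : ℕ) (by omega) m' rfl (by omega)
          have hmain : ((starRingEnd ℂ) (x k) * x m') * ((starRingEnd ℂ) (x j) * x j) =
              ((starRingEnd ℂ) (y k) * y m') * ((starRingEnd ℂ) (y j) * y j) := by
            have e1 : ((starRingEnd ℂ) (x k) * x m') * ((starRingEnd ℂ) (x j) * x j) =
                (starRingEnd ℂ) ((starRingEnd ℂ) (x j) * x k) *
                ((starRingEnd ℂ) (x j) * x m') := by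
              simp only [_root_.map_mul, Complex.conj_conj]; ring
            have e2 : ((starRingEnd ℂ) (y k) * y m') * ((starRingEnd ℂ) (y j) * y j) =
                (starRingEnd ℂ) ((starRingEnd ℂ) (y j) * y k) *
                ((starRingEnd ℂ) (y j) * y m') := by
              simp only [_root_.map_mul, Complex.conj_conj]; ring
            rw [e1, e2, h1, h2]
          rw [hΔjj] at hmain
          exact mul_right_cancel₀ (hΔjj ▸ hxjne) hmain
    -- conclude
    set c : ℂ := y j / x j with hc
    have hyjx : y j = c * x j := by
      rw [hc]; field_simp
    have hnormsq : Complex.normSq (x j) = Complex.normSq (y j) := by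
      have h := hΔjj
      rw [← Complex.normSq_eq_conj_mul_self, ← Complex.normSq_eq_conj_mul_self] at h
      exact_mod_cast h
    have habs : ‖c‖ = 1 := by
      rw [hc, norm_div]
      rw [← Complex.sq_norm, ← Complex.sq_norm] at hnormsq
      have hax : ‖x j‖ ≠ 0 := by simpa using hxj
      have : ‖x j‖ = ‖y j‖ := by
        nlinarith [norm_nonneg (x j), norm_nonneg (y j)]
      rw [← this]
      field_simp
    refine ⟨Complex.arg c, ?_⟩
    have hcexp : Complex.exp (Complex.I * (Complex.arg c : ℝ)) = c := by
      rw [mul_comm]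
      have := Complex.norm_mul_exp_arg_mul_I c
      rwa [habs, Complex.ofReal_one, one_mul] at this
    ext i
    show y i = (Complex.exp (Complex.I * (Complex.arg c : ℝ)) • x) i
    rw [hcexp]
    have hsmul : (c • x) i = c * x i := rfl
    rw [hsmul]
    rcases lt_or_ge (i : ℕ) (j : ℕ) with hi | hi
    · rw [hxlt i hi, hylt i hi, mul_zero]
    · have hD := D (i : ℕ) i rfl hi
      rw [hyjx, _root_.map_mul] at hD
      have hcc : (starRingEnd ℂ) c * c = 1 := by
        rw [← Complex.normSq_eq_conj_mul_self]
        norm_cast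
        rw [Complex.normSq_eq_norm_sq, habs]; norm_num
      have hxji : (starRingEnd ℂ) (x j) ≠ 0 := by simpa using hxj
      have hxieq : x i = (starRingEnd ℂ) c * y i := by
        have h' : (starRingEnd ℂ) (x j) * x i =
            (starRingEnd ℂ) (x j) * ((starRingEnd ℂ) c * y i) := by
          rw [hD]; ring
        exact mul_left_cancel₀ hxji h'
      rw [hxieq]
      calc y i = ((starRingEnd ℂ) c * c) * y i := by rw [hcc, one_mul]
        _ = c * ((starRingEnd ℂ) c * y i) := by ring
end

section
/- Let d ≥ 2. For α ∈ {1, …, 2d−2} define X_α ∈ Matrix (Fin d) (Fin d) ℂ by (X_α)_{kl} = 1 if k + l = α + 1 and (X_α)_{kl} = 0 otherwise (entries indexed by k, l ∈ {1, …, d}). For β ∈ {1, …, 2d−3} define Y_β by (Y_β)_{kl} = −i if k + l = β + 2 and k < l, (Y_β)_{kl} = i if k + l = β + 2 and k > l, and (Y_β)_{kl} = 0 otherwise. These 4d−5 matrices are selfadjoint, and for any x, y ∈ ℂ^d with ‖x‖ = ‖y‖, if ⟨x, X_α x⟩ = ⟨y, X_α y⟩ for all α and ⟨x, Y_β x⟩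 = ⟨y, Y_β y⟩ for all β, then there exists φ ∈ ℝ with y = exp(i φ) • x. Consequently this collection of 4d−5 selfadjoint matrices is informationally complete with respect to the set of pure states on ℂ^d. -/
open Matrix
open scoped ComplexOrder

noncomputable def AD {d : ℕ} (x : Fin d → ℂ) (s : ℕ) : ℂ :=
  ∑ k : Fin d, ∑ l : Fin d, if (k:ℕ) + (l:ℕ) = s then (starRingEnd ℂ) (x k) * x l else 0

noncomputable def Yform {d : ℕ} (x : Fin d → ℂ) (β : ℕ) : ℂ :=
  ∑ k : Fin d, ∑ l : Fin d, (starRingEnd ℂ) (x k) *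
    (if ((k:ℕ) + 1) + ((l:ℕ) + 1) = β + 2 ∧ (k:ℕ) < (l:ℕ) then -Complex.I
     else if ((k:ℕ) + 1) + ((l:ℕ) + 1) = β + 2 ∧ (l:ℕ) < (k:ℕ) then Complex.I
     else 0) * x l

noncomputable def QD {d : ℕ} (x : Fin d → ℂ) (s : ℕ) : ℂ :=
  ∑ k : Fin d, ∑ l : Fin d, if (k:ℕ) + (l:ℕ) = s ∧ (k:ℕ) ≤ (l:ℕ) then
    (if (k:ℕ) < (l:ℕ) then 2 else 1) * ((starRingEnd ℂ) (x k) * x l) else 0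

theorem Xform_eq_AD {d : ℕ} (x : Fin d → ℂ) (s : ℕ) :
    ∑ k : Fin d, ∑ l : Fin d, (starRingEnd ℂ) (x k) *
      (if ((k:ℕ) + 1) + ((l:ℕ) + 1) = (s + 1) + 1 then 1 else 0) * x l = AD x s := by
  unfold AD
  refine Finset.sum_congr rfl fun k _ => Finset.sum_congr rfl fun l _ => ?_
  by_cases h : (k:ℕ) + (l:ℕ) = s
  · rw [if_pos (by omega : ((k:ℕ) + 1) + ((l:ℕ) + 1) = (s + 1) + 1), if_pos h]
    ring
  · rw [if_neg (by omega : ¬((k:ℕ) + 1) + ((l:ℕ) + 1) = (s + 1) + 1), if_neg h]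
    ring

theorem Yform_zero {d : ℕ} (x : Fin d → ℂ) : Yform x 0 = 0 := by
  unfold Yform
  apply Finset.sum_eq_zero; intro k _
  apply Finset.sum_eq_zero; intro l _
  rw [if_neg (by omega), if_neg (by omega)]
  ring

theorem QD_eq {d : ℕ} (x : Fin d → ℂ) (s : ℕ) :
    QD x s = AD x s + Complex.I * Yform x s := by
  unfold QD AD Yform
  rw [Finset.mul_sum, ← Finset.sum_add_distrib]
  refine Finset.sum_congr rfl fun k _ => ?_
  rw [Finset.mul_sum, ← Finset.sum_add_distrib]
  refine Finset.sum_congr rfl fun l _ => ?_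
  by_cases h : (k:ℕ) + (l:ℕ) = s
  · rcases lt_trichotomy (k:ℕ) (l:ℕ) with hlt | heq | hgt
    · rw [if_pos ⟨h, le_of_lt hlt⟩, if_pos hlt, if_pos h,
        if_pos (⟨by omega, hlt⟩ : ((k:ℕ)+1)+((l:ℕ)+1) = s + 2 ∧ (k:ℕ) < (l:ℕ))]
      linear_combination ((starRingEnd ℂ) (x k) * x l) * Complex.I_mul_I
    · rw [if_pos ⟨h, le_of_eq heq⟩, if_neg (by omega : ¬(k:ℕ) < (l:ℕ)), if_pos h,
        if_neg (by omega : ¬(((k:ℕ)+1)+((l:ℕ)+1) = s + 2 ∧ (k:ℕ) < (l:ℕ))),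
        if_neg (by omega : ¬(((k:ℕ)+1)+((l:ℕ)+1) = s + 2 ∧ (l:ℕ) < (k:ℕ)))]
      ring
    · rw [if_neg (by omega : ¬((k:ℕ)+(l:ℕ) = s ∧ (k:ℕ) ≤ (l:ℕ))), if_pos h,
        if_neg (by omega : ¬(((k:ℕ)+1)+((l:ℕ)+1) = s + 2 ∧ (k:ℕ) < (l:ℕ))),
        if_pos (⟨by omega, hgt⟩ : ((k:ℕ)+1)+((l:ℕ)+1) = s + 2 ∧ (l:ℕ) < (k:ℕ))]
      linear_combination (-((starRingEnd ℂ) (x k) * x l)) * Complex.I_mul_I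
  · rw [if_neg (by omega : ¬((k:ℕ)+(l:ℕ) = s ∧ (k:ℕ) ≤ (l:ℕ))), if_neg h,
      if_neg (by omega : ¬(((k:ℕ)+1)+((l:ℕ)+1) = s + 2 ∧ (k:ℕ) < (l:ℕ))),
      if_neg (by omega : ¬(((k:ℕ)+1)+((l:ℕ)+1) = s + 2 ∧ (l:ℕ) < (k:ℕ)))]
    ring


theorem finStrongInd {d : ℕ} (P : Fin d → Prop)
    (h : ∀ m : Fin d, (∀ j : Fin d, (j:ℕ) < (m:ℕ) → P j) → P m) : ∀ m, P m := by
  have key : ∀ n (m : Fin d), (m:ℕ) = n → P m := by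
    intro n
    induction n using Nat.strong_induction_on with
    | _ n ih => intro m hm; exact h m (fun j hj => ih (j:ℕ) (hm ▸ hj) j rfl)
  exact fun m => key m m rfl

theorem sumPair {d : ℕ} (f : Fin d → Fin d → ℂ) (a b : Fin d) (v : ℂ)
    (h : ∀ k l, f k l = if k = a ∧ l = b then v else 0) :
    ∑ k, ∑ l, f k l = v := by
  simp [h, ite_and]

theorem AD_even {d : ℕ} (x : Fin d → ℂ) (m : Fin d)
    (hx : ∀ k : Fin d, (k:ℕ) < (m:ℕ) → x k = 0) :
    AD x (2 * (m:ℕ)) = (starRingEnd ℂ) (x m) * x m := by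
  unfold AD
  apply sumPair _ m m
  intro k l
  by_cases h : (k:ℕ) + (l:ℕ) = 2 * (m:ℕ)
  · rcases Nat.lt_or_ge (k:ℕ) (m:ℕ) with hk | hk
    · rw [if_pos h, hx k hk, if_neg]
      · simp
      · rintro ⟨rfl, rfl⟩; omega
    · rcases Nat.lt_or_ge (l:ℕ) (m:ℕ) with hl | hl
      · rw [if_pos h, hx l hl, if_neg]
        · simp
        · rintro ⟨rfl, rfl⟩; omega
      · have hk' : k = m := Fin.ext (by omega)
        have hl' : l = m := Fin.ext (by omega)
        subst hk' hl'
        simp [h]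
  · rw [if_neg h, if_neg]
    rintro ⟨rfl, rfl⟩; omega

theorem conj_mul_self_eq_zero {z : ℂ} (h : (starRingEnd ℂ) z * z = 0) : z = 0 := by
  by_contra hz
  exact (mul_ne_zero (by simpa using hz) hz) h

theorem core {d : ℕ} (hd : 2 ≤ d) (x y : Fin d → ℂ)
    (hN : ∑ k, (starRingEnd ℂ) (x k) * x k = ∑ k, (starRingEnd ℂ) (y k) * y k)
    (hA : ∀ s, s < 2 * d - 2 → AD x s = AD y s)
    (hQ : ∀ s, s < 2 * d - 2 → QD x s = QD y s) :
    ∃ φ : ℝ, ∀ k, y k = Complex.exp (Complex.I * φ) * x k := by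
  by_cases hx0 : ∀ k, x k = 0
  · refine ⟨0, fun k => ?_⟩
    have h0 : ∑ k, (starRingEnd ℂ) (y k) * y k = 0 := by
      rw [← hN]; simp [hx0]
    have h1 : ∑ k, (Complex.normSq (y k) : ℂ) = 0 := by
      rw [← h0]
      exact Finset.sum_congr rfl fun k _ => by rw [mul_comm, Complex.mul_conj]
    have h2 : ∑ k, Complex.normSq (y k) = 0 := by
      exact_mod_cast h1
    have h3 : ∀ k ∈ Finset.univ, Complex.normSq (y k) = 0 :=
      (Finset.sum_eq_zero_iff_of_nonneg (fun k _ => Complex.normSq_nonneg _)).mp h2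
    have : y k = 0 := Complex.normSq_eq_zero.mp (h3 k (Finset.mem_univ k))
    simp [this, hx0 k]
  · push_neg at hx0
    -- minimal index where x is nonzero
    set F := Finset.univ.filter (fun k : Fin d => x k ≠ 0) with hF
    have hFne : F.Nonempty := by
      obtain ⟨k, hk⟩ := hx0
      exact ⟨k, by simp [hF, hk]⟩
    set K : Fin d := F.min' hFne with hK
    have hxK : x K ≠ 0 := by
      have := F.min'_mem hFne
      simpa [hF] using this
    have hxpre : ∀ k : Fin d, (k:ℕ) < (K:ℕ) → x k = 0 := by
      intro k hk
      by_contra hne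
      have : K ≤ k := F.min'_le k (by simp [hF, hne])
      omega
    have hd2 : (K:ℕ) ≤ d - 1 := by omega
    -- y vanishes below K
    have hypre : ∀ k : Fin d, (k:ℕ) < (K:ℕ) → y k = 0 := by
      intro m
      induction m using finStrongInd with
      | h m ih =>
        intro hm
        have hAx : AD x (2 * (m:ℕ)) = 0 := by
          rw [AD_even x m (fun k hk => hxpre k (by omega)), hxpre m hm]
          simp
        have hAy : AD y (2 * (m:ℕ)) = (starRingEnd ℂ) (y m) * y m :=
          AD_even y m (fun k hk => ih k hk (by omega))
        have hbound : 2 * (m:ℕ) < 2 * d - 2 := by omega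
        have := (hA _ hbound).symm.trans hAx
        rw [hAy] at this
        exact conj_mul_self_eq_zero this
    -- equal moduli at K
    have hKmod : (starRingEnd ℂ) (x K) * x K = (starRingEnd ℂ) (y K) * y K := by
      rcases Nat.lt_or_ge (2 * (K:ℕ)) (2 * d - 2) with hb | hb
      · rw [← AD_even x K hxpre, ← AD_even y K hypre]
        exact hA _ hb
      · have hKtop : (K:ℕ) = d - 1 := by omega
        have hxs : ∑ k, (starRingEnd ℂ) (x k) * x k = (starRingEnd ℂ) (x K) * x K := by
          apply Finset.sum_eq_single_of_mem K (Finset.mem_univ K)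
          intro b _ hbK
          rw [hxpre b (by omega), mul_zero]
        have hys : ∑ k, (starRingEnd ℂ) (y k) * y k = (starRingEnd ℂ) (y K) * y K := by
          apply Finset.sum_eq_single_of_mem K (Finset.mem_univ K)
          intro b _ hbK
          rw [hypre b (by omega), mul_zero]
        rw [← hxs, ← hys]; exact hN
    set c : ℂ := y K / x K with hc
    have hyK : y K = c * x K := by
      rw [hc]; field_simp
    have hcc : (starRingEnd ℂ) c * c = 1 := by
      have h2 : (starRingEnd ℂ) (x K) * x K ≠ 0 :=
        mul_ne_zero (by simpa using hxK) hxK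
      apply mul_right_cancel₀ h2
      have h1 : (starRingEnd ℂ) c * c * ((starRingEnd ℂ) (x K) * x K)
          = (starRingEnd ℂ) (y K) * y K := by
        rw [hyK, _root_.map_mul]; ring
      rw [h1, ← hKmod, one_mul]
    -- main strong induction
    have hmain : ∀ l : Fin d, y l = c * x l := by
      intro L
      induction L using finStrongInd with
      | h L ih =>
        rcases lt_trichotomy (L:ℕ) (K:ℕ) with hL | hL | hL
        · rw [hypre L hL, hxpre L hL, mul_zero]
        · have : L = K := Fin.ext hL
          rw [this]; exact hyK
        · set s : ℕ := (K:ℕ) + (L:ℕ) with hs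
          have hsb : s < 2 * d - 2 := by omega
          have key : ∀ k l : Fin d,
              (if (k:ℕ) + (l:ℕ) = s ∧ (k:ℕ) ≤ (l:ℕ) then
                (if (k:ℕ) < (l:ℕ) then 2 else 1) * ((starRingEnd ℂ) (y k) * y l) else 0)
              - (if (k:ℕ) + (l:ℕ) = s ∧ (k:ℕ) ≤ (l:ℕ) then
                (if (k:ℕ) < (l:ℕ) then 2 else 1) * ((starRingEnd ℂ) (x k) * x l) else 0)
              = if k = K ∧ l = L then
                  2 * ((starRingEnd ℂ) (y K) * y L) - 2 * ((starRingEnd ℂ) (x K) * x L)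
                else 0 := by
            intro k l
            by_cases hP : (k:ℕ) + (l:ℕ) = s ∧ (k:ℕ) ≤ (l:ℕ)
            · obtain ⟨h1, h2⟩ := hP
              have hP' : (k:ℕ) + (l:ℕ) = s ∧ (k:ℕ) ≤ (l:ℕ) := ⟨h1, h2⟩
              rw [if_pos hP', if_pos hP']
              rcases lt_trichotomy (k:ℕ) (K:ℕ) with hk | hk | hk
              · have hne : ¬(k = K ∧ l = L) := by rintro ⟨rfl, -⟩; omega
                rw [if_neg hne, hxpre k hk, hypre k hk]
                simp
              · have heK : k = K := Fin.ext hk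
                have heL : l = L := Fin.ext (by omega)
                rw [if_pos (show k = K ∧ l = L from ⟨heK, heL⟩),
                  if_pos (show (k:ℕ) < (l:ℕ) from by omega), heK, heL]
              · have hlt : (l:ℕ) < (L:ℕ) := by omega
                have hklt : (k:ℕ) < (L:ℕ) := by omega
                have hne : ¬(k = K ∧ l = L) := by rintro ⟨rfl, -⟩; omega
                have hmul : (starRingEnd ℂ) (c * x k) * (c * x l)
                    = (starRingEnd ℂ) (x k) * x l := by
                  rw [_root_.map_mul]
                  linear_combination ((starRingEnd ℂ) (x k) * x l) * hcc
                rw [if_neg hne, ih l hlt, ih k hklt, hmul, sub_self]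
            · have hne : ¬(k = K ∧ l = L) := by
                rintro ⟨rfl, rfl⟩
                exact hP ⟨rfl, by omega⟩
              rw [if_neg hP, if_neg hP, if_neg hne, sub_self]
          have hsum : QD y s - QD x s
              = 2 * ((starRingEnd ℂ) (y K) * y L) - 2 * ((starRingEnd ℂ) (x K) * x L) := by
            unfold QD
            rw [← Finset.sum_sub_distrib]
            simp_rw [← Finset.sum_sub_distrib]
            exact sumPair _ K L _ key
          rw [hQ s hsb, sub_self] at hsum
          have heq : (starRingEnd ℂ) (y K) * y L = (starRingEnd ℂ) (x K) * x L := by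
            linear_combination (-1/2 : ℂ) * hsum
          have hxcK : (starRingEnd ℂ) (x K) ≠ 0 := by simpa using hxK
          apply mul_left_cancel₀ hxcK
          have h5 : (starRingEnd ℂ) c * ((starRingEnd ℂ) (x K) * y L)
              = (starRingEnd ℂ) (x K) * x L := by
            calc (starRingEnd ℂ) c * ((starRingEnd ℂ) (x K) * y L)
                = (starRingEnd ℂ) (y K) * y L := by rw [hyK, _root_.map_mul]; ring
              _ = (starRingEnd ℂ) (x K) * x L := heq
          linear_combination c * h5 - ((starRingEnd ℂ) (x K) * y L) * hcc
    have hnsq : Complex.normSq c = 1 := by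
      have h6 : (Complex.normSq c : ℂ) = 1 := by
        rw [← Complex.mul_conj c, mul_comm]; exact hcc
      exact_mod_cast h6
    have habs : ‖c‖ = 1 := by
      have h7 := Complex.sq_norm c
      rw [hnsq] at h7
      nlinarith [norm_nonneg c]
    refine ⟨c.arg, fun k => ?_⟩
    rw [hmain k]
    have hcval : Complex.exp (Complex.I * (c.arg : ℝ)) = c := by
      rw [mul_comm]
      conv_rhs => rw [← Complex.norm_mul_exp_arg_mul_I c]
      rw [habs, Complex.ofReal_one, one_mul]
    rw [hcval]


theorem pure_state_outer {d : ℕ} (ρ : Matrix (Fin d) (Fin d) ℂ)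
    (hPSD : ρ.PosSemidef) (htr : ρ.trace = 1) (hrank : ρ.rank = 1) :
    ∃ u : EuclideanSpace ℂ (Fin d), ‖u‖ = 1 ∧ ∀ k l, ρ k l = u k * (starRingEnd ℂ) (u l) := by
  have hH : ρ.IsHermitian := hPSD.1
  have hcard : Fintype.card {i // hH.eigenvalues i ≠ 0} = 1 := by
    rw [← hH.rank_eq_card_non_zero_eigs, hrank]
  obtain ⟨⟨i₀, hi₀⟩, huniq⟩ := Fintype.card_eq_one_iff.mp hcard
  -- all other eigenvalues vanish
  have hzero : ∀ i, i ≠ i₀ → hH.eigenvalues i = 0 := by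
    intro i hi
    by_contra hne
    have := huniq ⟨i, hne⟩
    simp only [Subtype.mk.injEq] at this
    exact hi this
  -- trace is the sum of eigenvalues
  have htr2 : ρ.trace = ∑ i, (hH.eigenvalues i : ℂ) := by
    conv_lhs => rw [hH.spectral_theorem]
    rw [Unitary.conjStarAlgAut_apply]
    rw [Matrix.trace_mul_cycle]
    rw [Unitary.coe_star_mul_self, one_mul, Matrix.trace_diagonal]
    simp [RCLike.ofReal_alg]
  have hsum : ∑ i, (hH.eigenvalues i : ℂ) = (hH.eigenvalues i₀ : ℂ) := by
    apply Finset.sum_eq_single_of_mem i₀ (Finset.mem_univ _)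
    intro b _ hb
    rw [hzero b hb]; simp
  have hval : hH.eigenvalues i₀ = 1 := by
    have : (hH.eigenvalues i₀ : ℂ) = 1 := by rw [← hsum, ← htr2, htr]
    exact_mod_cast this
  refine ⟨hH.eigenvectorBasis i₀, ?_, ?_⟩
  · exact hH.eigenvectorBasis.orthonormal.1 i₀
  · intro k l
    conv_lhs => rw [hH.spectral_theorem]
    rw [Unitary.conjStarAlgAut_apply]
    rw [Matrix.mul_apply]
    rw [Finset.sum_eq_single_of_mem i₀ (Finset.mem_univ _)]
    · rw [Matrix.mul_diagonal]
      simp only [Function.comp_apply, hval]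
      have h1 : (hH.eigenvectorUnitary : Matrix (Fin d) (Fin d) ℂ) k i₀
          = hH.eigenvectorBasis i₀ k := rfl
      have h2 : (star (hH.eigenvectorUnitary : Matrix (Fin d) (Fin d) ℂ)) i₀ l
          = (starRingEnd ℂ) (hH.eigenvectorBasis i₀ l) := by
        simp [Matrix.star_apply]
      rw [h1, h2]
      simp
    · intro b _ hb
      rw [Matrix.mul_diagonal]
      simp [Function.comp_apply, hzero b hb]

/-- Prop. 10 of the paper (explicit construction, following James): the `4d - 5` matrices
`X_α` (`α = 1, …, 2d - 2`, with `1`'s on the `α`-th antidiagonal, i.e. `(X_α)_{kl} = 1` iff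
`k + l = α + 1` in 1-based indexing) and `Y_β` (`β = 1, …, 2d - 3`, antisymmetric versions with
entries `∓ i` on the antidiagonal `k + l = β + 2`) are selfadjoint, separate unit vectors up to
a global phase, and form an informationally complete collection w.r.t. the pure states. -/
theorem james_construction_pure_state_ic (d : ℕ) (hd : 2 ≤ d)
    (X : ℕ → Matrix (Fin d) (Fin d) ℂ)
    (hX : ∀ α, ∀ k l : Fin d,
      X α k l = if ((k : ℕ) + 1) + ((l : ℕ) + 1) = α + 1 then 1 else 0)
    (Y : ℕ → Matrix (Fin d) (Fin d) ℂ)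
    (hY : ∀ β, ∀ k l : Fin d,
      Y β k l =
        if ((k : ℕ) + 1) + ((l : ℕ) + 1) = β + 2 ∧ (k : ℕ) < (l : ℕ) then -Complex.I
        else if ((k : ℕ) + 1) + ((l : ℕ) + 1) = β + 2 ∧ (l : ℕ) < (k : ℕ) then Complex.I
        else 0)
    (S : Fin (4 * d - 5) → Matrix (Fin d) (Fin d) ℂ)
    (hS : ∀ j : Fin (4 * d - 5),
      S j = if (j : ℕ) < 2 * d - 2 then X ((j : ℕ) + 1) else Y ((j : ℕ) - (2 * d - 2) + 1)) :
    (∀ j, (S j).IsHermitian) ∧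
    (∀ x y : EuclideanSpace ℂ (Fin d), ‖x‖ = ‖y‖ →
      (∀ j, ∑ k, ∑ l, (starRingEnd ℂ) (x k) * S j k l * x l =
            ∑ k, ∑ l, (starRingEnd ℂ) (y k) * S j k l * y l) →
      ∃ φ : ℝ, y = Complex.exp (Complex.I * φ) • x) ∧
    IsIC S (PureStates d) := by
  have hsep : ∀ x y : EuclideanSpace ℂ (Fin d), ‖x‖ = ‖y‖ →
      (∀ j, ∑ k, ∑ l, (starRingEnd ℂ) (x k) * S j k l * x l =
            ∑ k, ∑ l, (starRingEnd ℂ) (y k) * S j k l * y l) →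
      ∃ φ : ℝ, y = Complex.exp (Complex.I * φ) • x := by
    intro x y hnorm hforms
    have hN : ∑ k, (starRingEnd ℂ) (x k) * x k = ∑ k, (starRingEnd ℂ) (y k) * y k := by
      have hx := inner_self_eq_norm_sq_to_K (𝕜 := ℂ) x
      have hy := inner_self_eq_norm_sq_to_K (𝕜 := ℂ) y
      rw [PiLp.inner_apply] at hx hy
      simp only [RCLike.inner_apply] at hx hy
      simp_rw [mul_comm ((starRingEnd ℂ) _) _]
      rw [hx, hy, hnorm]
    have hA : ∀ s, s < 2 * d - 2 → AD x s = AD y s := by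
      intro s hs
      have hj := hforms ⟨s, by omega⟩
      rw [hS ⟨s, by omega⟩] at hj
      simp only [Fin.val_mk] at hj
      rw [if_pos hs] at hj
      simp_rw [hX] at hj
      rw [← Xform_eq_AD x s, ← Xform_eq_AD y s]
      exact hj
    have hV : ∀ s, 1 ≤ s → s < 2 * d - 2 → Yform x s = Yform y s := by
      intro s h1 h2
      have hlt : 2 * d - 3 + s < 4 * d - 5 := by omega
      have hj := hforms ⟨2 * d - 3 + s, hlt⟩
      rw [hS ⟨2 * d - 3 + s, hlt⟩] at hj
      simp only [Fin.val_mk] at hj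
      rw [if_neg (by omega : ¬(2 * d - 3 + s < 2 * d - 2))] at hj
      rw [(by omega : 2 * d - 3 + s - (2 * d - 2) + 1 = s)] at hj
      simp_rw [hY] at hj
      exact hj
    have hQ : ∀ s, s < 2 * d - 2 → QD x s = QD y s := by
      intro s hs
      rcases Nat.eq_zero_or_pos s with h0 | h0
      · subst h0
        rw [QD_eq, QD_eq, Yform_zero, Yform_zero, hA 0 hs]
      · rw [QD_eq, QD_eq, hA s hs, hV s h0 hs]
    obtain ⟨φ, hφ⟩ := core hd x y hN hA hQ
    exact ⟨φ, by ext k; simp [hφ k]⟩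
  refine ⟨?_, hsep, ?_⟩
  · -- Hermitian
    intro j
    rw [hS j]
    split_ifs with hj
    · unfold Matrix.IsHermitian
      apply Matrix.ext; intro k l
      rw [Matrix.conjTranspose_apply, hX, hX]
      split_ifs <;> (try (exfalso; omega)) <;> simp
    · unfold Matrix.IsHermitian
      apply Matrix.ext; intro k l
      rw [Matrix.conjTranspose_apply, hY, hY]
      split_ifs <;> (try (exfalso; omega)) <;> simp
  · -- informational completeness
    rintro ρ₁ ⟨⟨hPSD₁, htr₁⟩, hrank₁⟩ ρ₂ ⟨⟨hPSD₂, htr₂⟩, hrank₂⟩ htr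
    obtain ⟨u₁, hu₁n, hu₁⟩ := pure_state_outer ρ₁ hPSD₁ htr₁ hrank₁
    obtain ⟨u₂, hu₂n, hu₂⟩ := pure_state_outer ρ₂ hPSD₂ htr₂ hrank₂
    have htrace : ∀ (ρ : Matrix (Fin d) (Fin d) ℂ) (u : EuclideanSpace ℂ (Fin d)),
        (∀ k l, ρ k l = u k * (starRingEnd ℂ) (u l)) → ∀ j,
        (ρ * S j).trace = ∑ k, ∑ l, (starRingEnd ℂ) (u k) * S j k l * u l := by
      intro ρ u hu j
      rw [Matrix.trace]
      simp only [Matrix.diag_apply, Matrix.mul_apply]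
      rw [Finset.sum_comm]
      refine Finset.sum_congr rfl fun l _ => Finset.sum_congr rfl fun k _ => ?_
      rw [hu]; ring
    have hforms : ∀ j, ∑ k, ∑ l, (starRingEnd ℂ) (u₁ k) * S j k l * u₁ l =
        ∑ k, ∑ l, (starRingEnd ℂ) (u₂ k) * S j k l * u₂ l := by
      intro j
      rw [← htrace ρ₁ u₁ hu₁ j, ← htrace ρ₂ u₂ hu₂ j]
      exact htr j
    obtain ⟨φ, hφ⟩ := hsep u₁ u₂ (by rw [hu₁n, hu₂n]) hforms
    have he : Complex.exp (Complex.I * φ) * (starRingEnd ℂ) (Complex.exp (Complex.I * φ)) = 1 := by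
      rw [← Complex.exp_conj, ← Complex.exp_add]
      have hconj : (starRingEnd ℂ) (Complex.I * (φ:ℂ)) = -(Complex.I * φ) := by
        rw [_root_.map_mul, Complex.conj_I, Complex.conj_ofReal]; ring
      rw [hconj, add_neg_cancel, Complex.exp_zero]
    apply Matrix.ext; intro k l
    rw [hu₁ k l, hu₂ k l, hφ]
    have h2 : ∀ m : Fin d, (Complex.exp (Complex.I * φ) • u₁) m
        = Complex.exp (Complex.I * φ) * u₁ m := fun m => rfl
    rw [h2 k, h2 l, _root_.map_mul]
    linear_combination (-(u₁ k * (starRingEnd ℂ) (u₁ l))) * he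
end

section
/- Let P ∈ Matrix (Fin d) (Fin d) ℂ be an orthogonal projection (P = Pᴴ = P * P) of rank r, and let H ∈ Matrix (Fin d) (Fin d) ℂ be selfadjoint. Then there exist a real number λ > 0 and orthogonal projections Q₁, Q₂ ∈ Matrix (Fin d) (Fin d) ℂ, each of rank r, such that Complex.I • (H * P − P * H) = λ • (Q₁ − Q₂). -/
open Matrix Polynomial

namespace TangentAux

variable {d : ℕ}

local notation "Mat" => Matrix (Fin d) (Fin d) ℂ

lemma conj_pow (U M N : Mat) (hUN : U * N = 1) (hNU : N * U = 1) (k : ℕ) :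
    (U * M * N) ^ k = U * M ^ k * N := by
  induction k with
  | zero => simp [hUN]
  | succ n ih =>
      rw [pow_succ, pow_succ, ih]
      have : U * M ^ n * N * (U * M * N) = U * M ^ n * (N * U) * (M * N) := by
        simp only [Matrix.mul_assoc]
      rw [this, hNU, Matrix.mul_one]
      simp only [Matrix.mul_assoc]

lemma aeval_conj (U M N : Mat) (hUN : U * N = 1) (hNU : N * U = 1) (q : ℝ[X]) :
    aeval (U * M * N) q = U * aeval M q * N := by
  rw [aeval_eq_sum_range, aeval_eq_sum_range, Finset.mul_sum, Finset.sum_mul]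
  refine Finset.sum_congr rfl fun i _ => ?_
  rw [conj_pow U M N hUN hNU, Matrix.mul_smul, Matrix.smul_mul]

lemma aeval_commute (S M : Mat) (h : S * M = M * S) (q : ℝ[X]) :
    S * aeval M q = aeval M q * S := by
  rw [aeval_eq_sum_range, Finset.mul_sum, Finset.sum_mul]
  refine Finset.sum_congr rfl fun i _ => ?_
  rw [Matrix.mul_smul, Matrix.smul_mul, (Commute.pow_right h i : S * M ^ i = M ^ i * S)]

lemma aeval_isHermitian {M : Mat} (hM : M.IsHermitian) (q : ℝ[X]) :
    (aeval M q).IsHermitian := by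
  rw [aeval_eq_sum_range]
  show _ = _
  rw [Matrix.conjTranspose_sum]
  refine Finset.sum_congr rfl fun i _ => ?_
  rw [Matrix.conjTranspose_smul, star_trivial, (hM.pow i).eq]

lemma aeval_diagonal (v : Fin d → ℂ) (q : ℝ[X]) :
    aeval (diagonal v) q = diagonal (fun i => aeval (v i) q) := by
  rw [aeval_eq_sum_range]
  have : (fun i => aeval (v i) q) = fun i =>
      ∑ j ∈ Finset.range (q.natDegree + 1), q.coeff j • (v i) ^ j := by
    funext i; rw [aeval_eq_sum_range]
  rw [this]
  rw [show (diagonal fun i => ∑ j ∈ Finset.range (q.natDegree + 1), q.coeff j • v i ^ j)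
      = ∑ j ∈ Finset.range (q.natDegree + 1), diagonal (fun i => q.coeff j • v i ^ j) from by
    ext a b
    rcases eq_or_ne a b with rfl | hab
    · simp [Matrix.sum_apply]
    · simp [Matrix.sum_apply, Matrix.diagonal_apply_ne _ hab]]
  refine Finset.sum_congr rfl fun i _ => ?_
  rw [diagonal_pow, ← diagonal_smul]
  rfl

lemma rank_eq_trace (E : Mat) (hE : E * E = E) : (E.rank : ℂ) = E.trace := by
  have hcomp : E.mulVecLin ∘ₗ E.mulVecLin = E.mulVecLin := by
    rw [← Matrix.mulVecLin_mul, hE]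
  have hproj : LinearMap.IsProj (LinearMap.range E.mulVecLin) E.mulVecLin := by
    refine ⟨fun x => LinearMap.mem_range_self _ x, ?_⟩
    rintro x ⟨y, rfl⟩
    rw [← LinearMap.comp_apply, hcomp]
  have htr := hproj.trace
  have h2 : LinearMap.trace ℂ (Fin d → ℂ) E.mulVecLin = E.trace := by
    rw [LinearMap.trace_eq_matrix_trace ℂ (Pi.basisFun ℂ (Fin d)),
      LinearMap.toMatrix_eq_toMatrix']
    rw [← Matrix.toLin'_apply' E, LinearMap.toMatrix'_toLin']
  rw [Matrix.rank, ← h2, htr]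

lemma idem_aux (c : ℂ) (hc : (2*c) ≠ 0) (X : Mat) (hX : X * X = (c*c) • 1) :
    ((2*c)⁻¹ • (c • (1:Mat) + X)) * ((2*c)⁻¹ • (c • (1:Mat) + X))
      = (2*c)⁻¹ • (c • (1:Mat) + X) := by
  have expand : (c • (1:Mat) + X) * (c • (1:Mat) + X) = (2*c) • (c • (1:Mat) + X) := by
    rw [Matrix.add_mul, Matrix.mul_add, Matrix.mul_add, hX]
    simp only [Matrix.smul_mul, Matrix.mul_smul, Matrix.one_mul, Matrix.mul_one]
    match_scalars <;> ring
  rw [Matrix.smul_mul, Matrix.mul_smul, expand, smul_smul, smul_smul]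
  congr 1
  field_simp

end TangentAux

open TangentAux

/-- The key step of Lemma 15 of the paper: for an orthogonal projection `P` of rank `r` and a
selfadjoint matrix `H`, the tangent vector `i[H, P]` is a positive multiple of a difference of
two rank-`r` orthogonal projections. -/
theorem tangent_vector_is_difference_of_projections (d r : ℕ)
    (P H : Matrix (Fin d) (Fin d) ℂ)
    (hP_herm : P.IsHermitian) (hP_idem : P * P = P) (hP_rank : P.rank = r)
    (hH : H.IsHermitian) :
    ∃ lam : ℝ, 0 < lam ∧
      ∃ Q₁ Q₂ : Matrix (Fin d) (Fin d) ℂ,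
        Q₁.IsHermitian ∧ Q₁ * Q₁ = Q₁ ∧ Q₁.rank = r ∧
        Q₂.IsHermitian ∧ Q₂ * Q₂ = Q₂ ∧ Q₂.rank = r ∧
        Complex.I • (H * P - P * H) = lam • (Q₁ - Q₂) := by
  classical
  set A : Matrix (Fin d) (Fin d) ℂ := Complex.I • (H * P - P * H) with hA_def
  have hA : A.IsHermitian := by
    show _ = _
    rw [hA_def, Matrix.conjTranspose_smul, Matrix.conjTranspose_sub, Matrix.conjTranspose_mul,
      Matrix.conjTranspose_mul, hP_herm.eq, hH.eq]
    rw [Complex.star_def, Complex.conj_I, neg_smul, ← smul_neg, neg_sub]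
  -- commutation relation of P with A
  have hPA : P * A = A - A * P := by
    rw [hA_def, Matrix.mul_smul, Matrix.smul_mul, ← smul_sub]
    congr 1
    have e1 : P * (P * H) = P * H := by rw [← Matrix.mul_assoc, hP_idem]
    have e2 : H * P * P = H * P := by rw [Matrix.mul_assoc, hP_idem]
    rw [Matrix.mul_sub, Matrix.sub_mul, e1, e2, Matrix.mul_assoc P H P]
    abel
  -- spectral data of A
  set V : Matrix (Fin d) (Fin d) ℂ := (hA.eigenvectorUnitary : Matrix (Fin d) (Fin d) ℂ)
    with hV_def
  have hV1 : V * Vᴴ = 1 := by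
    rw [← Matrix.star_eq_conjTranspose]
    exact (Matrix.mem_unitaryGroup_iff).mp hA.eigenvectorUnitary.2
  have hV2 : Vᴴ * V = 1 := by
    rw [← Matrix.star_eq_conjTranspose]
    exact (Matrix.mem_unitaryGroup_iff').mp hA.eigenvectorUnitary.2
  set μ : Fin d → ℝ := hA.eigenvalues with hμ_def
  have hspec : A = V * diagonal (fun i => (μ i : ℂ)) * Vᴴ := by
    have := hA.spectral_theorem
    rw [← Matrix.star_eq_conjTranspose]
    exact this
  set lam : ℝ := 1 + ∑ i, μ i ^ 2 with hlam_def
  have hlam : 0 < lam := by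
    have : (0:ℝ) ≤ ∑ i, μ i ^ 2 := Finset.sum_nonneg fun i _ => sq_nonneg _
    linarith
  have hbound : ∀ i, 0 ≤ lam ^ 2 - μ i ^ 2 := by
    intro i
    have h1 : μ i ^ 2 ≤ ∑ j, μ j ^ 2 :=
      Finset.single_le_sum (fun j _ => sq_nonneg (μ j)) (Finset.mem_univ i)
    nlinarith [Finset.sum_nonneg (fun j (_ : j ∈ Finset.univ) => sq_nonneg (μ j))]
  -- the interpolation polynomial
  set s : Finset ℝ := insert 0 (Finset.image (fun i => μ i ^ 2) Finset.univ) with hs_def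
  set q0 : Polynomial ℝ := Lagrange.interpolate s id (fun x => Real.sqrt (lam ^ 2 - x))
    with hq0_def
  have heval : ∀ x ∈ s, q0.eval x = Real.sqrt (lam ^ 2 - x) := by
    intro x hx
    exact Lagrange.eval_interpolate_at_node _ (Set.injOn_id _) hx
  -- diagonalization of A * A
  have hAA : A * A = V * diagonal (fun i => ((μ i ^ 2 : ℝ) : ℂ)) * Vᴴ := by
    conv_lhs => rw [hspec]
    have : V * diagonal (fun i => (μ i : ℂ)) * Vᴴ * (V * diagonal (fun i => (μ i : ℂ)) * Vᴴ)
        = V * (diagonal (fun i => (μ i : ℂ)) * (Vᴴ * V) * diagonal (fun i => (μ i : ℂ))) * Vᴴ := by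
      simp only [Matrix.mul_assoc]
    rw [this, hV2, Matrix.mul_one, diagonal_mul_diagonal]
    congr 2
    funext i
    push_cast
    ring
  set F : Matrix (Fin d) (Fin d) ℂ := aeval (A * A) q0 with hF_def
  have hAA_herm : (A * A).IsHermitian := by
    show _ = _
    rw [Matrix.conjTranspose_mul, hA.eq]
  have hF_herm : F.IsHermitian := aeval_isHermitian hAA_herm q0
  have hFdiag : F = V * diagonal (fun i => (Real.sqrt (lam ^ 2 - μ i ^ 2) : ℂ)) * Vᴴ := by
    rw [hF_def, hAA, aeval_conj _ _ _ hV1 hV2, aeval_diagonal]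
    have : (fun i => aeval ((μ i ^ 2 : ℝ) : ℂ) q0)
        = fun i => (Real.sqrt (lam ^ 2 - μ i ^ 2) : ℂ) := by
      funext i
      rw [show ((μ i ^ 2 : ℝ) : ℂ) = algebraMap ℝ ℂ (μ i ^ 2) from rfl,
        aeval_algebraMap_apply_eq_algebraMap_eval]
      rw [heval _ (Finset.mem_insert_of_mem (Finset.mem_image_of_mem _ (Finset.mem_univ i)))]
      rfl
    rw [this]
  have hFF : F * F = ((lam ^ 2 : ℝ) : ℂ) • (1 : Matrix (Fin d) (Fin d) ℂ) - A * A := by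
    rw [hFdiag, hAA]
    have h1 : V * diagonal (fun i => (Real.sqrt (lam ^ 2 - μ i ^ 2) : ℂ)) * Vᴴ *
        (V * diagonal (fun i => (Real.sqrt (lam ^ 2 - μ i ^ 2) : ℂ)) * Vᴴ)
        = V * (diagonal (fun i => (Real.sqrt (lam ^ 2 - μ i ^ 2) : ℂ)) * (Vᴴ * V) *
          diagonal (fun i => (Real.sqrt (lam ^ 2 - μ i ^ 2) : ℂ))) * Vᴴ := by
      simp only [Matrix.mul_assoc]
    rw [h1, hV2, Matrix.mul_one, diagonal_mul_diagonal]
    have hdc : (diagonal (fun _ : Fin d => ((lam ^ 2 : ℝ) : ℂ)))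
        = ((lam ^ 2 : ℝ) : ℂ) • (1 : Matrix (Fin d) (Fin d) ℂ) := by
      ext a b
      rcases eq_or_ne a b with rfl | hab
      · simp
      · simp [Matrix.diagonal_apply_ne _ hab, Matrix.one_apply_ne hab]
    have h2 : ((lam ^ 2 : ℝ) : ℂ) • (1 : Matrix (Fin d) (Fin d) ℂ)
        = V * diagonal (fun _ => ((lam ^ 2 : ℝ) : ℂ)) * Vᴴ := by
      rw [hdc, Matrix.mul_smul, Matrix.smul_mul, Matrix.mul_one, hV1]
    rw [h2, ← Matrix.sub_mul, ← Matrix.mul_sub, diagonal_sub]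
    have hfun : (fun i => (Real.sqrt (lam ^ 2 - μ i ^ 2) : ℂ) * (Real.sqrt (lam ^ 2 - μ i ^ 2) : ℂ))
        = fun i => ((lam ^ 2 : ℝ) : ℂ) - ((μ i ^ 2 : ℝ) : ℂ) := by
      funext i
      rw [← Complex.ofReal_mul, Real.mul_self_sqrt (hbound i), Complex.ofReal_sub]
    rw [hfun]
  -- the symmetry S = 2P - 1
  set S : Matrix (Fin d) (Fin d) ℂ := (2:ℂ) • P - 1 with hS_def
  have hS_herm : Sᴴ = S := by
    rw [hS_def, Matrix.conjTranspose_sub, Matrix.conjTranspose_smul, Matrix.conjTranspose_one,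
      hP_herm.eq]
    norm_num
  have hSS : S * S = 1 := by
    rw [hS_def]
    rw [Matrix.sub_mul, Matrix.mul_sub, Matrix.mul_sub, Matrix.smul_mul, Matrix.mul_smul,
      hP_idem]
    simp only [Matrix.mul_one, Matrix.one_mul, smul_smul]
    match_scalars <;> ring
  have hSA : S * A = -(A * S) := by
    rw [hS_def]
    simp only [Matrix.sub_mul, Matrix.mul_sub, Matrix.smul_mul, Matrix.mul_smul,
      Matrix.one_mul, Matrix.mul_one]
    rw [hPA]
    match_scalars <;> ring
  have hSAA : S * (A * A) = (A * A) * S := by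
    calc S * (A * A) = (S * A) * A := by rw [Matrix.mul_assoc]
    _ = -(A * S) * A := by rw [hSA]
    _ = -(A * (S * A)) := by simp [Matrix.neg_mul, Matrix.mul_assoc]
    _ = -(A * -(A * S)) := by rw [hSA]
    _ = (A * A) * S := by simp [Matrix.mul_neg, Matrix.mul_assoc]
  have hSF : S * F = F * S := aeval_commute _ _ hSAA q0
  have hAAA : A * (A * A) = (A * A) * A := by simp [Matrix.mul_assoc]
  have hAF : A * F = F * A := aeval_commute _ _ hAAA q0
  set c : ℂ := (lam : ℂ) with hc_def
  have hc : c ≠ 0 := by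
    simp [hc_def, Complex.ofReal_ne_zero]
    exact ne_of_gt hlam
  have h2c : (2*c) ≠ 0 := by
    simp [hc]
  have hcc : ((lam ^ 2 : ℝ) : ℂ) = c * c := by
    rw [hc_def]; push_cast; ring
  -- the two projections
  set Q₁ : Matrix (Fin d) (Fin d) ℂ := (2*c)⁻¹ • (c • 1 + (A + S * F)) with hQ₁_def
  set Q₂ : Matrix (Fin d) (Fin d) ℂ := (2*c)⁻¹ • (c • 1 + (-A + S * F)) with hQ₂_def
  -- key algebra
  have hASF : A * (S * F) = -((S * F) * A) := by
    calc A * (S * F) = (A * S) * F := by rw [Matrix.mul_assoc]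
    _ = -((S * A) * F) := by rw [hSA]; simp
    _ = -(S * (A * F)) := by rw [Matrix.mul_assoc]
    _ = -(S * (F * A)) := by rw [hAF]
    _ = -((S * F) * A) := by rw [Matrix.mul_assoc]
  have hSFSF : (S * F) * (S * F) = F * F := by
    calc (S * F) * (S * F) = S * (F * S) * F := by simp [Matrix.mul_assoc]
    _ = S * (S * F) * F := by rw [hSF]
    _ = (S * S) * (F * F) := by simp [Matrix.mul_assoc]
    _ = F * F := by rw [hSS, Matrix.one_mul]
  have hX₁ : (A + S * F) * (A + S * F) = (c * c) • 1 := by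
    simp only [Matrix.add_mul, Matrix.mul_add]
    rw [hASF, hSFSF, hFF, hcc]
    abel
  have hX₂ : (-A + S * F) * (-A + S * F) = (c * c) • 1 := by
    simp only [Matrix.add_mul, Matrix.mul_add, Matrix.neg_mul, Matrix.mul_neg, neg_neg]
    rw [hASF, hSFSF, hFF, hcc]
    abel
  have hQ₁_idem : Q₁ * Q₁ = Q₁ := idem_aux c h2c _ hX₁
  have hQ₂_idem : Q₂ * Q₂ = Q₂ := idem_aux c h2c _ hX₂
  -- Hermitian
  have hstar2c : star ((2*c)⁻¹) = (2*c)⁻¹ := by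
    rw [star_inv₀]
    congr 1
    rw [star_mul']
    simp [hc_def, Complex.star_def, Complex.conj_ofReal]
  have hSF_herm : (S * F)ᴴ = S * F := by
    rw [Matrix.conjTranspose_mul, hF_herm.eq, hS_herm, ← hSF]
  have hc1_herm : ((c • (1 : Matrix (Fin d) (Fin d) ℂ))ᴴ) = c • 1 := by
    rw [Matrix.conjTranspose_smul, Matrix.conjTranspose_one]
    congr 1
    simp [hc_def, Complex.star_def, Complex.conj_ofReal]
  have hQ₁_herm : Q₁.IsHermitian := by
    show _ = _
    rw [hQ₁_def, Matrix.conjTranspose_smul, hstar2c, Matrix.conjTranspose_add,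
      Matrix.conjTranspose_add, hc1_herm, hA.eq, hSF_herm]
  have hQ₂_herm : Q₂.IsHermitian := by
    show _ = _
    rw [hQ₂_def, Matrix.conjTranspose_smul, hstar2c, Matrix.conjTranspose_add,
      Matrix.conjTranspose_add, hc1_herm, Matrix.conjTranspose_neg, hA.eq, hSF_herm]
  -- traces
  have htrP : P.trace = (r : ℂ) := by
    rw [← rank_eq_trace P hP_idem, hP_rank]
  have htrA : A.trace = 0 := by
    rw [hA_def, Matrix.trace_smul, Matrix.trace_sub, Matrix.trace_mul_comm H P]
    simp
  have htrS : S.trace = 2 * (r : ℂ) - (d : ℂ) := by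
    rw [hS_def, Matrix.trace_sub, Matrix.trace_smul, htrP, Matrix.trace_one]
    simp [smul_eq_mul]
  have htrPK : ∀ j : ℕ,
      (P * (A * A) ^ (j + 1)).trace + (P * (A * A) ^ (j + 1)).trace
        = ((A * A) ^ (j + 1)).trace := by
    intro j
    set B : Matrix (Fin d) (Fin d) ℂ := A * (A * A) ^ j with hB_def
    have hcomm : A * (A * A) ^ j = (A * A) ^ j * A :=
      (((Commute.refl A).mul_right (Commute.refl A)).pow_right j).eq
    have hK : (A * A) ^ (j + 1) = A * B := by
      rw [hB_def, pow_succ', Matrix.mul_assoc]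
    have hBA : B * A = (A * A) ^ (j + 1) := by
      rw [hB_def, hcomm, Matrix.mul_assoc, ← pow_succ]
    have e1 : ((A * P) * B).trace = (P * (B * A)).trace := by
      rw [Matrix.mul_assoc, Matrix.trace_mul_comm, Matrix.mul_assoc]
    have e2 : ((P * A) * B).trace = (A * B).trace - (P * (B * A)).trace := by
      rw [hPA, Matrix.sub_mul, Matrix.trace_sub, e1]
    have e3 : (P * (A * A) ^ (j + 1)).trace
        = (A * B).trace - (P * (A * A) ^ (j + 1)).trace := by
      conv_lhs => rw [hK, ← Matrix.mul_assoc]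
      rw [e2, hBA]
    have e4 : (A * B).trace = ((A * A) ^ (j + 1)).trace := by rw [← hK]
    linear_combination e3 + e4
  have htrSK : ∀ j : ℕ, (S * (A * A) ^ (j + 1)).trace = 0 := by
    intro j
    rw [hS_def, Matrix.sub_mul, Matrix.smul_mul, Matrix.one_mul, Matrix.trace_sub,
      Matrix.trace_smul]
    have := htrPK j
    rw [smul_eq_mul]
    linear_combination this
  have htrSF : (S * F).trace = c * (2 * (r:ℂ) - (d:ℂ)) := by
    rw [hF_def, aeval_eq_sum_range, Finset.mul_sum, Matrix.trace_sum]
    rw [Finset.sum_eq_single_of_mem 0 (Finset.mem_range.mpr (Nat.succ_pos _))]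
    · rw [pow_zero, Matrix.mul_smul, Matrix.mul_one, Matrix.trace_smul, htrS]
      have hcoeff : q0.coeff 0 = lam := by
        rw [Polynomial.coeff_zero_eq_eval_zero,
          heval 0 (Finset.mem_insert_self _ _), sub_zero, Real.sqrt_sq hlam.le]
      rw [hcoeff, Complex.real_smul, hc_def]
    · intro i _ hi
      obtain ⟨j, rfl⟩ := Nat.exists_eq_succ_of_ne_zero hi
      rw [Matrix.mul_smul, Matrix.trace_smul, htrSK j, smul_zero]
  -- traces of the projections
  have htr1 : Matrix.trace (1 : Matrix (Fin d) (Fin d) ℂ) = (d : ℂ) := by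
    rw [Matrix.trace_one]; simp
  have htrQ₁ : Q₁.trace = (r : ℂ) := by
    rw [hQ₁_def, Matrix.trace_smul, Matrix.trace_add, Matrix.trace_add, Matrix.trace_smul,
      htr1, htrA, htrSF]
    rw [smul_eq_mul, smul_eq_mul]
    field_simp
    ring
  have htrQ₂ : Q₂.trace = (r : ℂ) := by
    rw [hQ₂_def, Matrix.trace_smul, Matrix.trace_add, Matrix.trace_add, Matrix.trace_smul,
      htr1, Matrix.trace_neg, htrA, htrSF]
    rw [smul_eq_mul, smul_eq_mul]
    field_simp
    ring
  have hQ₁_rank : Q₁.rank = r := by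
    have := rank_eq_trace Q₁ hQ₁_idem
    rw [htrQ₁] at this
    exact_mod_cast this
  have hQ₂_rank : Q₂.rank = r := by
    have := rank_eq_trace Q₂ hQ₂_idem
    rw [htrQ₂] at this
    exact_mod_cast this
  refine ⟨lam, hlam, Q₁, Q₂, hQ₁_herm, hQ₁_idem, hQ₁_rank, hQ₂_herm, hQ₂_idem, hQ₂_rank, ?_⟩
  have hdiff : Q₁ - Q₂ = c⁻¹ • A := by
    rw [hQ₁_def, hQ₂_def, ← smul_sub]
    have : (c • (1 : Matrix (Fin d) (Fin d) ℂ) + (A + S * F))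
        - (c • 1 + (-A + S * F)) = A + A := by abel
    rw [this, ← two_smul ℂ A, smul_smul, mul_inv]
    congr 1
    field_simp
  rw [hdiff, ← algebraMap_smul ℂ lam (c⁻¹ • A), smul_smul]
  rw [show algebraMap ℝ ℂ lam = c from rfl, mul_inv_cancel₀ hc, one_smul]
end

section
/- Let x, y ∈ ℝ³ be unit vectors (with coordinates x₁, x₂, x₃ and y₁, y₂, y₃). If x₁x₂ = y₁y₂, x₂x₃ = y₂y₃, x₃x₁ = y₃y₁, and x₁² − x₂² = y₁² − y₂², then y = x or y = −x. -/
/-- The embedding of the real projective plane used in Cor. 14 of the paper: unit vectors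
`x, y ∈ ℝ³` with the same values of `x₁x₂, x₂x₃, x₃x₁` and `x₁² - x₂²` agree up to a sign. -/
theorem real_projective_plane_embedding (x y : EuclideanSpace ℝ (Fin 3))
    (hx : ‖x‖ = 1) (hy : ‖y‖ = 1)
    (h12 : x 0 * x 1 = y 0 * y 1)
    (h23 : x 1 * x 2 = y 1 * y 2)
    (h31 : x 2 * x 0 = y 2 * y 0)
    (hsq : x 0 ^ 2 - x 1 ^ 2 = y 0 ^ 2 - y 1 ^ 2) :
    y = x ∨ y = -x := by
  have hx2 : x 0 ^ 2 + x 1 ^ 2 + x 2 ^ 2 = 1 := by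
    have h : √(x 0 ^ 2 + x 1 ^ 2 + x 2 ^ 2) = 1 := by
      rw [← hx, EuclideanSpace.norm_eq]
      simp [Fin.sum_univ_three, sq_abs]
    exact Real.sqrt_eq_one.mp h
  have hy2 : y 0 ^ 2 + y 1 ^ 2 + y 2 ^ 2 = 1 := by
    have h : √(y 0 ^ 2 + y 1 ^ 2 + y 2 ^ 2) = 1 := by
      rw [← hy, EuclideanSpace.norm_eq]
      simp [Fin.sum_univ_three, sq_abs]
    exact Real.sqrt_eq_one.mp h
  have h1 : (x 0 ^ 2 + x 1 ^ 2) ^ 2 = (y 0 ^ 2 + y 1 ^ 2) ^ 2 := by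
    linear_combination (x 0 ^ 2 - x 1 ^ 2 + y 0 ^ 2 - y 1 ^ 2) * hsq
      + 4 * (x 0 * x 1 + y 0 * y 1) * h12
  have h2 : x 0 ^ 2 + x 1 ^ 2 = y 0 ^ 2 + y 1 ^ 2 := by
    nlinarith [h1, sq_nonneg (x 0), sq_nonneg (x 1), sq_nonneg (y 0), sq_nonneg (y 1)]
  have e0 : x 0 ^ 2 = y 0 ^ 2 := by linarith
  have e1 : x 1 ^ 2 = y 1 ^ 2 := by linarith
  have e2 : x 2 ^ 2 = y 2 ^ 2 := by linarith
  set s : ℝ := x 0 * y 0 + x 1 * y 1 + x 2 * y 2 with hsdef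
  have hs : s * s = 1 := by
    have h : s * s = (x 0 ^ 2 + x 1 ^ 2 + x 2 ^ 2) ^ 2 := by
      rw [hsdef]
      linear_combination (-(x 0 ^ 2)) * e0 - (x 1 ^ 2) * e1 - (x 2 ^ 2) * e2
        - 2 * (x 0 * x 1) * h12 - 2 * (x 1 * x 2) * h23 - 2 * (x 2 * x 0) * h31
    rw [h, hx2]; ring
  have hinner : (inner ℝ x y : ℝ) = s := by
    simp [PiLp.inner_apply, Fin.sum_univ_three, hsdef, mul_comm]
  have hz : ‖y - s • x‖ ^ 2 = 0 := by
    rw [norm_sub_sq_real, inner_smul_right, norm_smul, real_inner_comm, hinner, hy, hx]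
    simp [abs_mul]
    nlinarith [hs]
  have hyx : y = s • x := by
    have h := norm_eq_zero.mp (pow_eq_zero_iff (n := 2) (by norm_num) |>.mp hz)
    rwa [sub_eq_zero] at h
  rcases mul_self_eq_one_iff.mp hs with h | h
  · left; rw [hyx, h, one_smul]
  · right; rw [hyx, h]; simp
end
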